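/- arXiv:1006.2022 — 3 statements merged into one kernel-verified Lean document; each statement's English description precedes it below -/
import Mathlib

section
/- The rate region of the one-way cooperating MAC is convex: the set of rate pairs (R1,R2) ∈ ℝ≥0² for which there exist a finite set 𝒰 and a joint pmf of the form P(s)p(u,x1|s)p(x2|u)P(y|x1,x2,s) satisfying C12 ≥ I(U;S), R1 ≤ I(X1;Y|X2,S,U) + C12 − I(U;S), R2 ≤ I(X2;Y|X1,S,U), and R1+R2 ≤ min{ I(X1,X2;Y|S,U) + C12 − I(U;S), I(X1,X2;Y|S) } is a convex subset of ℝ². -/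
open scoped BigOperators Classical
open Finset

namespace Paper

variable {Ω : Type} [Fintype Ω]

/-- `pr μ X a` is the probability that the random variable `X` takes the value `a`
under the pmf `μ` on the finite sample space `Ω`. -/
noncomputable def pr {A : Type} (μ : Ω → ℝ) (X : Ω → A) (a : A) : ℝ :=
  ∑ ω, if X ω = a then μ ω else 0

/-- `μ` is a probability mass function on the finite space `Ω`. -/
def IsPMF (μ : Ω → ℝ) : Prop := (∀ ω, 0 ≤ μ ω) ∧ ∑ ω, μ ω = 1

/-- Shannon entropy (in bits) of the random variable `X` under `μ`. -/
noncomputable def ent {A : Type} [Fintype A] (μ : Ω → ℝ) (X : Ω → A) : ℝ :=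
  -∑ a, pr μ X a * Real.logb 2 (pr μ X a)

/-- Mutual information `I(X;Y)` (in bits) under `μ`. -/
noncomputable def mi {A B : Type} [Fintype A] [Fintype B] (μ : Ω → ℝ)
    (X : Ω → A) (Y : Ω → B) : ℝ :=
  ent μ X + ent μ Y - ent μ (fun ω => (X ω, Y ω))

/-- Conditional mutual information `I(X;Y|Z)` (in bits) under `μ`. -/
noncomputable def cmi {A B C : Type} [Fintype A] [Fintype B] [Fintype C] (μ : Ω → ℝ)
    (X : Ω → A) (Y : Ω → B) (Z : Ω → C) : ℝ :=
  ent μ (fun ω => (X ω, Z ω)) + ent μ (fun ω => (Y ω, Z ω))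
    - ent μ (fun ω => (X ω, Y ω, Z ω)) - ent μ Z

/-- `X` and `Y` are conditionally independent given `Z` under `μ`:
`P(X = a, Y = b | Z = c) = P(X = a | Z = c) · P(Y = b | Z = c)`
whenever `P(Z = c) ≠ 0`. -/
def CondIndep {A B C : Type} (μ : Ω → ℝ) (X : Ω → A) (Y : Ω → B) (Z : Ω → C) : Prop :=
  ∀ a b c, pr μ Z c ≠ 0 →
    pr μ (fun ω => (X ω, Y ω, Z ω)) (a, b, c) * pr μ Z c
      = pr μ (fun ω => (X ω, Z ω)) (a, c) * pr μ (fun ω => (Y ω, Z ω)) (b, c)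



variable {𝒳₁ 𝒳₂ 𝒮 𝒴 : Type} [Fintype 𝒳₁] [Fintype 𝒳₂] [Fintype 𝒮] [Fintype 𝒴]

/-- The joint pmf `P(s)·p(u,x₁|s)·p(x₂|u)·P(y|x₁,x₂,s)` on `𝒮 × 𝒰 × 𝒳₁ × 𝒳₂ × 𝒴`. -/
noncomputable def jointPMF {𝒰 : Type} (PS : 𝒮 → ℝ) (W : 𝒳₁ → 𝒳₂ → 𝒮 → 𝒴 → ℝ)
    (pUX1 : 𝒮 → 𝒰 × 𝒳₁ → ℝ) (pX2 : 𝒰 → 𝒳₂ → ℝ) : 𝒮 × 𝒰 × 𝒳₁ × 𝒳₂ × 𝒴 → ℝ :=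
  fun q => PS q.1 * pUX1 q.1 (q.2.1, q.2.2.1) * pX2 q.2.1 q.2.2.2.1
      * W q.2.2.1 q.2.2.2.1 q.1 q.2.2.2.2

/-- The single-letter constraints of the one-way-cooperation capacity region, for a
given auxiliary alphabet `𝒰` and conditional pmfs `p(u,x₁|s)`, `p(x₂|u)`:
`C₁₂ ≥ I(U;S)`, `R₁ ≤ I(X₁;Y|X₂,S,U) + C₁₂ − I(U;S)`, `R₂ ≤ I(X₂;Y|X₁,S,U)`,
`R₁+R₂ ≤ min{I(X₁,X₂;Y|S,U) + C₁₂ − I(U;S), I(X₁,X₂;Y|S)}`. -/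
def RegionConds {𝒰 : Type} [Fintype 𝒰] (PS : 𝒮 → ℝ) (W : 𝒳₁ → 𝒳₂ → 𝒮 → 𝒴 → ℝ)
    (C12 R1 R2 : ℝ) (pUX1 : 𝒮 → 𝒰 × 𝒳₁ → ℝ) (pX2 : 𝒰 → 𝒳₂ → ℝ) : Prop :=
  (∀ s q, 0 ≤ pUX1 s q) ∧ (∀ s, ∑ q : 𝒰 × 𝒳₁, pUX1 s q = 1) ∧
  (∀ u x, 0 ≤ pX2 u x) ∧ (∀ u, ∑ x, pX2 u x = 1) ∧
  C12 ≥ mi (jointPMF PS W pUX1 pX2) (fun q => q.2.1) (fun q => q.1) ∧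
  R1 ≤ cmi (jointPMF PS W pUX1 pX2) (fun q => q.2.2.1) (fun q => q.2.2.2.2)
        (fun q => (q.2.2.2.1, q.1, q.2.1))
      + C12 - mi (jointPMF PS W pUX1 pX2) (fun q => q.2.1) (fun q => q.1) ∧
  R2 ≤ cmi (jointPMF PS W pUX1 pX2) (fun q => q.2.2.2.1) (fun q => q.2.2.2.2)
        (fun q => (q.2.2.1, q.1, q.2.1)) ∧
  R1 + R2 ≤ min
      (cmi (jointPMF PS W pUX1 pX2) (fun q => (q.2.2.1, q.2.2.2.1)) (fun q => q.2.2.2.2)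
          (fun q => (q.1, q.2.1))
        + C12 - mi (jointPMF PS W pUX1 pX2) (fun q => q.2.1) (fun q => q.1))
      (cmi (jointPMF PS W pUX1 pX2) (fun q => (q.2.2.1, q.2.2.2.1)) (fun q => q.2.2.2.2)
          (fun q => q.1))

/-- Membership in the single-letter rate region of Theorem 1: there exist a finite
auxiliary alphabet `𝒰` and a joint pmf of the form `P(s)p(u,x₁|s)p(x₂|u)P(y|x₁,x₂,s)`
satisfying the constraints. -/
def InRegion (PS : 𝒮 → ℝ) (W : 𝒳₁ → 𝒳₂ → 𝒮 → 𝒴 → ℝ) (C12 R1 R2 : ℝ) : Prop :=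
  0 ≤ R1 ∧ 0 ≤ R2 ∧
  ∃ (𝒰 : Type) (_ : Fintype 𝒰) (pUX1 : 𝒮 → 𝒰 × 𝒳₁ → ℝ) (pX2 : 𝒰 → 𝒳₂ → ℝ),
    RegionConds PS W C12 R1 R2 pUX1 pX2

end Paper

namespace Paper

namespace Conv

open Finset Function

variable {Ω : Type} [Fintype Ω]

noncomputable def entH {A : Type} [Fintype A] (p : A → ℝ) : ℝ :=
  -∑ a, p a * Real.logb 2 (p a)

lemma ent_eq_entH {A : Type} [Fintype A] (μ : Ω → ℝ) (X : Ω → A) :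
    ent μ X = entH (pr μ X) := rfl

lemma pr_nonneg {A : Type} {μ : Ω → ℝ} (hμ : ∀ ω, 0 ≤ μ ω) (X : Ω → A) (a : A) :
    0 ≤ pr μ X a := by
  refine Finset.sum_nonneg fun ω _ => ?_
  by_cases h : X ω = a <;> simp [h, hμ ω]

lemma sum_pr {A : Type} [Fintype A] (μ : Ω → ℝ) (X : Ω → A) :
    ∑ a, pr μ X a = ∑ ω, μ ω := by
  unfold pr
  rw [Finset.sum_comm]
  exact Finset.sum_congr rfl fun ω _ => by simp

lemma pr_exists_of_ne_zero {A : Type} {μ : Ω → ℝ} {X : Ω → A} {a : A}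
    (h : pr μ X a ≠ 0) : ∃ ω, X ω = a := by
  by_contra hc
  push_neg at hc
  exact h (Finset.sum_eq_zero fun ω _ => by simp [hc ω])

lemma pr_comp_inj {A B : Type} (μ : Ω → ℝ) (X : Ω → A) {g : A → B}
    (hg : Injective g) (a : A) :
    pr μ (fun ω => g (X ω)) (g a) = pr μ X a :=
  Finset.sum_congr rfl fun ω _ => by rw [hg.eq_iff]

lemma ent_comp_inj {A B : Type} [Fintype A] [Fintype B] (μ : Ω → ℝ) (X : Ω → A)
    {g : A → B} (hg : Injective g) :
    ent μ (fun ω => g (X ω)) = ent μ X := by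
  unfold ent
  congr 1
  have h0 : ∀ b ∈ Finset.univ, b ∉ Finset.image g Finset.univ →
      pr μ (fun ω => g (X ω)) b * Real.logb 2 (pr μ (fun ω => g (X ω)) b) = 0 := by
    intro b _ hb
    have : pr μ (fun ω => g (X ω)) b = 0 := by
      by_contra h
      obtain ⟨ω, hω⟩ := pr_exists_of_ne_zero h
      exact hb (Finset.mem_image.mpr ⟨X ω, Finset.mem_univ _, hω⟩)
    rw [this]; simp
  rw [← Finset.sum_subset (Finset.subset_univ _) h0,
    Finset.sum_image (fun a _ a' _ h => hg h)]
  exact Finset.sum_congr rfl fun a _ => by rw [pr_comp_inj μ X hg]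

lemma mul_logb_mul {x y : ℝ} (hx : 0 ≤ x) (hy : 0 ≤ y) :
    (x * y) * Real.logb 2 (x * y)
      = y * (x * Real.logb 2 x) + x * (y * Real.logb 2 y) := by
  rcases eq_or_lt_of_le hx with h | h
  · simp [← h]
  rcases eq_or_lt_of_le hy with h' | h'
  · simp [← h']
  simp only [Real.logb, Real.log_mul h.ne' h'.ne']
  ring

lemma entH_split {A : Type} [Fintype A] {p₁ p₂ : A → ℝ} {L M : ℝ}
    (hL : 0 < L) (hM : 0 < M)
    (h1 : ∀ a, 0 ≤ p₁ a) (h2 : ∀ a, 0 ≤ p₂ a)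
    (hs1 : ∑ a, p₁ a = 1) (hs2 : ∑ a, p₂ a = 1)
    (hd : ∀ a, p₁ a = 0 ∨ p₂ a = 0) :
    entH (fun a => L * p₁ a + M * p₂ a)
      = L * entH p₁ + M * entH p₂ - (L * Real.logb 2 L + M * Real.logb 2 M) := by
  have key : ∀ a, (L * p₁ a + M * p₂ a) * Real.logb 2 (L * p₁ a + M * p₂ a)
      = L * (p₁ a * Real.logb 2 (p₁ a)) + M * (p₂ a * Real.logb 2 (p₂ a))
        + (p₁ a * (L * Real.logb 2 L) + p₂ a * (M * Real.logb 2 M)) := by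
    intro a
    rcases hd a with h | h
    · rw [h]
      have := mul_logb_mul hM.le (h2 a)
      simp only [mul_zero, zero_mul, zero_add, add_zero]
      linarith [this]
    · rw [h]
      have := mul_logb_mul hL.le (h1 a)
      simp only [mul_zero, zero_mul, zero_add, add_zero]
      linarith [this]
  unfold entH
  rw [Finset.sum_congr rfl fun a _ => key a]
  rw [Finset.sum_add_distrib, Finset.sum_add_distrib, ← Finset.mul_sum, ← Finset.mul_sum,
    Finset.sum_add_distrib, ← Finset.sum_mul, ← Finset.sum_mul, hs1, hs2]
  ring

lemma entH_concave {A : Type} [Fintype A] {p₁ p₂ : A → ℝ} {L M : ℝ}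
    (hL : 0 ≤ L) (hM : 0 ≤ M) (hLM : L + M = 1)
    (h1 : ∀ a, 0 ≤ p₁ a) (h2 : ∀ a, 0 ≤ p₂ a) :
    L * entH p₁ + M * entH p₂ ≤ entH (fun a => L * p₁ a + M * p₂ a) := by
  have hlog2 : (0:ℝ) < Real.log 2 := Real.log_pos one_lt_two
  have key : ∀ a, (L * p₁ a + M * p₂ a) * Real.log (L * p₁ a + M * p₂ a)
      ≤ L * (p₁ a * Real.log (p₁ a)) + M * (p₂ a * Real.log (p₂ a)) := fun a =>
    Real.convexOn_mul_log.2 (Set.mem_Ici.mpr (h1 a)) (Set.mem_Ici.mpr (h2 a)) hL hM hLM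
  have e : ∀ {B : Type} [Fintype B] (p : B → ℝ),
      entH p = -(∑ a, p a * Real.log (p a)) / Real.log 2 := by
    intro B _ p
    unfold entH
    rw [neg_div, Finset.sum_div]
    congr 1
    exact Finset.sum_congr rfl fun a _ => by rw [Real.logb]; ring
  rw [e, e, e]
  have hsum : ∑ a, (L * p₁ a + M * p₂ a) * Real.log (L * p₁ a + M * p₂ a)
      ≤ L * ∑ a, p₁ a * Real.log (p₁ a) + M * ∑ a, p₂ a * Real.log (p₂ a) := by
    rw [Finset.mul_sum, Finset.mul_sum, ← Finset.sum_add_distrib]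
    exact Finset.sum_le_sum fun a _ => key a
  rw [show L * (-(∑ a, p₁ a * Real.log (p₁ a)) / Real.log 2)
        + M * (-(∑ a, p₂ a * Real.log (p₂ a)) / Real.log 2)
      = (-(L * ∑ a, p₁ a * Real.log (p₁ a) + M * ∑ a, p₂ a * Real.log (p₂ a))) / Real.log 2
    by ring]
  exact div_le_div_of_nonneg_right (by linarith) hlog2.le

lemma sum_if_push {ι M : Type*} [Fintype ι] [AddCommMonoid M] (c : Prop) [Decidable c]
    (f : ι → M) : (∑ i, if c then f i else 0) = if c then ∑ i, f i else 0 := by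
  split <;> simp

lemma entH_channel {A B C : Type} [Fintype A] [Fintype B] [Fintype C]
    (q : A × B × C → ℝ) (p : A × C → ℝ) (K : A × C → B → ℝ)
    (hK1 : ∀ x, ∑ b, K x b = 1)
    (hp : ∀ x, 0 ≤ p x) (hK : ∀ x b, 0 ≤ K x b)
    (hq : ∀ a b c, q (a, b, c) = p (a, c) * K (a, c) b) :
    entH q = entH p - ∑ x, p x * ∑ b, K x b * Real.logb 2 (K x b) := by
  have key : ∀ a b c, q (a, b, c) * Real.logb 2 (q (a, b, c))
      = K (a, c) b * (p (a, c) * Real.logb 2 (p (a, c)))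
        + p (a, c) * (K (a, c) b * Real.logb 2 (K (a, c) b)) := by
    intro a b c
    rw [hq]
    exact mul_logb_mul (hp _) (hK _ _)
  have main : ∑ x : A × B × C, q x * Real.logb 2 (q x)
      = (∑ x : A × C, p x * Real.logb 2 (p x))
        + ∑ x : A × C, p x * ∑ b, K x b * Real.logb 2 (K x b) := by
    rw [Fintype.sum_prod_type]
    calc ∑ a, ∑ y : B × C, q (a, y) * Real.logb 2 (q (a, y))
        = ∑ a, ∑ c, ∑ b, (K (a, c) b * (p (a, c) * Real.logb 2 (p (a, c)))
            + p (a, c) * (K (a, c) b * Real.logb 2 (K (a, c) b))) := by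
          refine Finset.sum_congr rfl fun a _ => ?_
          rw [Fintype.sum_prod_type, Finset.sum_comm]
          exact Finset.sum_congr rfl fun c _ => Finset.sum_congr rfl fun b _ => key a b c
      _ = ∑ a, ∑ c, (p (a, c) * Real.logb 2 (p (a, c))
            + p (a, c) * ∑ b, K (a, c) b * Real.logb 2 (K (a, c) b)) := by
          refine Finset.sum_congr rfl fun a _ => Finset.sum_congr rfl fun c _ => ?_
          rw [Finset.sum_add_distrib, ← Finset.sum_mul, hK1, one_mul, ← Finset.mul_sum]
      _ = _ := by
          rw [Fintype.sum_prod_type (f := fun x : A × C => p x * Real.logb 2 (p x)),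
            Fintype.sum_prod_type (f := fun x : A × C => p x * ∑ b, K x b * Real.logb 2 (K x b)),
            ← Finset.sum_add_distrib]
          exact Finset.sum_congr rfl fun a _ => by rw [← Finset.sum_add_distrib]
  unfold entH
  rw [main]
  ring

end Conv
namespace Conv

open Finset Function

section Mix

variable {Ω Ω₁ Ω₂ : Type} [Fintype Ω] [Fintype Ω₁] [Fintype Ω₂]
variable {μ : Ω → ℝ} {μ₁ : Ω₁ → ℝ} {μ₂ : Ω₂ → ℝ} {e₁ : Ω₁ → Ω} {e₂ : Ω₂ → Ω} {L M : ℝ}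

lemma ent_mix_split
    (hmix : ∀ (A : Type) (V : Ω → A) (v : A), pr μ V v
      = L * pr μ₁ (fun ω => V (e₁ ω)) v + M * pr μ₂ (fun ω => V (e₂ ω)) v)
    (hL : 0 < L) (hM : 0 < M)
    (h1 : ∀ ω, 0 ≤ μ₁ ω) (hs1 : ∑ ω, μ₁ ω = 1)
    (h2 : ∀ ω, 0 ≤ μ₂ ω) (hs2 : ∑ ω, μ₂ ω = 1)
    {A A₁ A₂ : Type} [Fintype A] [Fintype A₁] [Fintype A₂]
    (V : Ω → A) (V₁ : Ω₁ → A₁) (V₂ : Ω₂ → A₂) (g₁ : A₁ → A) (g₂ : A₂ → A)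
    (hg₁ : Injective g₁) (hg₂ : Injective g₂)
    (hd : ∀ x y, g₁ x ≠ g₂ y)
    (hV₁ : ∀ ω, V (e₁ ω) = g₁ (V₁ ω)) (hV₂ : ∀ ω, V (e₂ ω) = g₂ (V₂ ω)) :
    ent μ V = L * ent μ₁ V₁ + M * ent μ₂ V₂
      - (L * Real.logb 2 L + M * Real.logb 2 M) := by
  have hfun : pr μ V = fun v => L * pr μ₁ (fun ω => V (e₁ ω)) v
      + M * pr μ₂ (fun ω => V (e₂ ω)) v := funext fun v => hmix A V v
  have hdisj : ∀ v, pr μ₁ (fun ω => V (e₁ ω)) v = 0 ∨ pr μ₂ (fun ω => V (e₂ ω)) v = 0 := by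
    intro v
    by_contra hc
    push_neg at hc
    obtain ⟨ω₁, hω₁⟩ := pr_exists_of_ne_zero hc.1
    obtain ⟨ω₂, hω₂⟩ := pr_exists_of_ne_zero hc.2
    exact hd (V₁ ω₁) (V₂ ω₂) (by rw [← hV₁, ← hV₂, hω₁, hω₂])
  have hsum1 : ∑ v, pr μ₁ (fun ω => V (e₁ ω)) v = 1 := by rw [sum_pr, hs1]
  have hsum2 : ∑ v, pr μ₂ (fun ω => V (e₂ ω)) v = 1 := by rw [sum_pr, hs2]
  have := entH_split (p₁ := pr μ₁ (fun ω => V (e₁ ω))) (p₂ := pr μ₂ (fun ω => V (e₂ ω)))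
    hL hM (pr_nonneg h1 _) (pr_nonneg h2 _) hsum1 hsum2 hdisj
  rw [ent_eq_entH, hfun, this, ent_eq_entH μ₁ V₁, ent_eq_entH μ₂ V₂]
  have i1 : entH (pr μ₁ (fun ω => V (e₁ ω))) = entH (pr μ₁ V₁) := by
    rw [show (fun ω => V (e₁ ω)) = fun ω => g₁ (V₁ ω) from funext hV₁]
    exact ent_comp_inj μ₁ V₁ hg₁
  have i2 : entH (pr μ₂ (fun ω => V (e₂ ω))) = entH (pr μ₂ V₂) := by
    rw [show (fun ω => V (e₂ ω)) = fun ω => g₂ (V₂ ω) from funext hV₂]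
    exact ent_comp_inj μ₂ V₂ hg₂
  rw [i1, i2]

lemma ent_mix_ge
    (hmix : ∀ (A : Type) (V : Ω → A) (v : A), pr μ V v
      = L * pr μ₁ (fun ω => V (e₁ ω)) v + M * pr μ₂ (fun ω => V (e₂ ω)) v)
    (hL : 0 ≤ L) (hM : 0 ≤ M) (hLM : L + M = 1)
    (h1 : ∀ ω, 0 ≤ μ₁ ω) (h2 : ∀ ω, 0 ≤ μ₂ ω)
    {A : Type} [Fintype A] (V : Ω → A) :
    L * ent μ₁ (fun ω => V (e₁ ω)) + M * ent μ₂ (fun ω => V (e₂ ω)) ≤ ent μ V := by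
  have hfun : pr μ V = fun v => L * pr μ₁ (fun ω => V (e₁ ω)) v
      + M * pr μ₂ (fun ω => V (e₂ ω)) v := funext fun v => hmix A V v
  rw [ent_eq_entH μ V, hfun]
  exact entH_concave hL hM hLM (pr_nonneg h1 _) (pr_nonneg h2 _)

lemma ent_mix_of_eq
    (hmix : ∀ (A : Type) (V : Ω → A) (v : A), pr μ V v
      = L * pr μ₁ (fun ω => V (e₁ ω)) v + M * pr μ₂ (fun ω => V (e₂ ω)) v)
    (hLM : L + M = 1)
    {A : Type} [Fintype A] (V : Ω → A)
    (heq : ∀ v, pr μ₁ (fun ω => V (e₁ ω)) v = pr μ₂ (fun ω => V (e₂ ω)) v) :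
    ent μ V = L * ent μ₁ (fun ω => V (e₁ ω)) + M * ent μ₂ (fun ω => V (e₂ ω)) := by
  have hfun : pr μ V = pr μ₂ (fun ω => V (e₂ ω)) := funext fun v => by
    rw [hmix A V v, heq v, ← add_mul, hLM, one_mul]
  have hent : ent μ₁ (fun ω => V (e₁ ω)) = ent μ₂ (fun ω => V (e₂ ω)) := by
    rw [ent_eq_entH, ent_eq_entH, funext heq]
  rw [ent_eq_entH μ V, hfun, hent, ← add_mul, hLM, one_mul]
  exact (ent_eq_entH _ _).symm

end Mix

end Conv
namespace Conv

open Finset Function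

section Joint

variable {𝒳₁ 𝒳₂ 𝒮 𝒴 : Type} [Fintype 𝒳₁] [Fintype 𝒳₂] [Fintype 𝒮] [Fintype 𝒴]
variable {𝒰 : Type} [Fintype 𝒰]
variable {PS : 𝒮 → ℝ} {W : 𝒳₁ → 𝒳₂ → 𝒮 → 𝒴 → ℝ}
variable {pUX1 : 𝒮 → 𝒰 × 𝒳₁ → ℝ} {pX2 : 𝒰 → 𝒳₂ → ℝ}

lemma jointPMF_nonneg (hPS : ∀ s, 0 ≤ PS s) (hW : ∀ x1 x2 s y, 0 ≤ W x1 x2 s y)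
    (hU : ∀ s q, 0 ≤ pUX1 s q) (hX : ∀ u x, 0 ≤ pX2 u x) :
    ∀ ω, 0 ≤ jointPMF PS W pUX1 pX2 ω := by
  intro ω
  unfold jointPMF
  have := hPS ω.1
  have := hU ω.1 (ω.2.1, ω.2.2.1)
  have := hX ω.2.1 ω.2.2.2.1
  have := hW ω.2.2.1 ω.2.2.2.1 ω.1 ω.2.2.2.2
  positivity

lemma jointPMF_marg (hU1 : ∀ s, ∑ q : 𝒰 × 𝒳₁, pUX1 s q = 1)
    (hX1 : ∀ u, ∑ x, pX2 u x = 1) (hW1 : ∀ x1 x2 s, ∑ y, W x1 x2 s y = 1) (s : 𝒮) :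
    ∑ r : 𝒰 × 𝒳₁ × 𝒳₂ × 𝒴, jointPMF PS W pUX1 pX2 (s, r) = PS s := by
  unfold jointPMF
  simp only [Fintype.sum_prod_type]
  have step : ∀ (u : 𝒰) (x1 : 𝒳₁),
      ∑ x2, ∑ y, PS s * pUX1 s (u, x1) * pX2 u x2 * W x1 x2 s y
        = PS s * pUX1 s (u, x1) := by
    intro u x1
    have h1 : ∀ x2, ∑ y, PS s * pUX1 s (u, x1) * pX2 u x2 * W x1 x2 s y
        = PS s * pUX1 s (u, x1) * pX2 u x2 := by
      intro x2
      rw [← Finset.mul_sum, hW1, mul_one]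
    rw [Finset.sum_congr rfl fun x2 _ => h1 x2, ← Finset.mul_sum, hX1, mul_one]
  calc ∑ u, ∑ x1, ∑ x2, ∑ y, PS s * pUX1 s (u, x1) * pX2 u x2 * W x1 x2 s y
      = ∑ u, ∑ x1, PS s * pUX1 s (u, x1) :=
        Finset.sum_congr rfl fun u _ => Finset.sum_congr rfl fun x1 _ => step u x1
    _ = PS s * ∑ u, ∑ x1, pUX1 s (u, x1) := by rw [Finset.mul_sum]; exact Finset.sum_congr rfl fun u _ => by rw [Finset.mul_sum]
    _ = PS s := by
        have := hU1 s
        rw [Fintype.sum_prod_type] at this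
        rw [this, mul_one]

lemma jointPMF_sum (hU1 : ∀ s, ∑ q : 𝒰 × 𝒳₁, pUX1 s q = 1)
    (hX1 : ∀ u, ∑ x, pX2 u x = 1) (hW1 : ∀ x1 x2 s, ∑ y, W x1 x2 s y = 1)
    (hPS1 : ∑ s, PS s = 1) :
    ∑ ω, jointPMF PS W pUX1 pX2 ω = 1 := by
  rw [Fintype.sum_prod_type]
  rw [Finset.sum_congr rfl fun s _ => jointPMF_marg hU1 hX1 hW1 s, hPS1]

lemma pr_jointPMF_fst (hU1 : ∀ s, ∑ q : 𝒰 × 𝒳₁, pUX1 s q = 1)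
    (hX1 : ∀ u, ∑ x, pX2 u x = 1) (hW1 : ∀ x1 x2 s, ∑ y, W x1 x2 s y = 1) (s : 𝒮) :
    pr (jointPMF PS W pUX1 pX2) (fun q => q.1) s = PS s := by
  unfold pr
  rw [Fintype.sum_prod_type]
  have : ∀ s' : 𝒮, ∑ r : 𝒰 × 𝒳₁ × 𝒳₂ × 𝒴,
      (if (s', r).1 = s then jointPMF PS W pUX1 pX2 (s', r) else 0)
      = if s' = s then ∑ r : 𝒰 × 𝒳₁ × 𝒳₂ × 𝒴, jointPMF PS W pUX1 pX2 (s', r) else 0 := by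
    intro s'
    by_cases h : s' = s <;> simp [h]
  rw [Finset.sum_congr rfl fun s' _ => this s', Finset.sum_ite_eq' Finset.univ s
    (fun s' => ∑ r : 𝒰 × 𝒳₁ × 𝒳₂ × 𝒴, jointPMF PS W pUX1 pX2 (s', r))]
  simp [jointPMF_marg hU1 hX1 hW1 s]

lemma pr_jointPMF_channel (hW1 : ∀ x1 x2 s, ∑ y, W x1 x2 s y = 1)
    (x1 : 𝒳₁) (x2 : 𝒳₂) (y : 𝒴) (s : 𝒮) :
    pr (jointPMF PS W pUX1 pX2)
        (fun q => ((q.2.2.1, q.2.2.2.1), q.2.2.2.2, q.1)) ((x1, x2), y, s)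
      = pr (jointPMF PS W pUX1 pX2)
          (fun q => ((q.2.2.1, q.2.2.2.1), q.1)) ((x1, x2), s) * W x1 x2 s y := by
  have lhs : pr (jointPMF PS W pUX1 pX2)
      (fun q => ((q.2.2.1, q.2.2.2.1), q.2.2.2.2, q.1)) ((x1, x2), y, s)
      = ∑ u, jointPMF PS W pUX1 pX2 (s, u, x1, x2, y) := by
    unfold pr
    simp only [Fintype.sum_prod_type, Prod.mk.injEq, ite_and, sum_if_push,
      Fintype.sum_ite_eq']
    rw [Finset.sum_comm]
    exact Finset.sum_congr rfl fun u _ => Fintype.sum_ite_eq' s _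
  have rhs : pr (jointPMF PS W pUX1 pX2)
      (fun q => ((q.2.2.1, q.2.2.2.1), q.1)) ((x1, x2), s)
      = ∑ u, ∑ y', jointPMF PS W pUX1 pX2 (s, u, x1, x2, y') := by
    unfold pr
    simp only [Fintype.sum_prod_type, Prod.mk.injEq, ite_and, sum_if_push,
      Fintype.sum_ite_eq']
    rw [Finset.sum_comm]
    refine Finset.sum_congr rfl fun u _ => ?_
    have inner : ∀ (x : 𝒮) (x2' : 𝒳₂),
        (∑ y' : 𝒴, if x2' = x2 then if x = s then
            jointPMF PS W pUX1 pX2 (x, u, x1, x2', y') else 0 else 0)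
          = if x2' = x2 then (if x = s then
              (∑ y' : 𝒴, jointPMF PS W pUX1 pX2 (x, u, x1, x2', y')) else 0) else 0 := by
      intro x x2'
      by_cases h1 : x2' = x2 <;> by_cases h2 : x = s <;> simp [h1, h2]
    rw [Finset.sum_congr rfl fun x _ => Finset.sum_congr rfl fun x2' _ => inner x x2']
    rw [Finset.sum_congr rfl fun x _ => Fintype.sum_ite_eq' x2
      (fun x2' => if x = s then (∑ y' : 𝒴, jointPMF PS W pUX1 pX2 (x, u, x1, x2', y')) else 0)]
    exact Fintype.sum_ite_eq' s _
  rw [lhs, rhs, Finset.sum_mul]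
  refine Finset.sum_congr rfl fun u _ => ?_
  unfold jointPMF
  rw [Finset.sum_mul]
  have : ∀ y', PS s * pUX1 s (u, x1) * pX2 u x2 * W x1 x2 s y' * W x1 x2 s y
      = (PS s * pUX1 s (u, x1) * pX2 u x2 * W x1 x2 s y) * W x1 x2 s y' := by
    intro y'; ring
  rw [Finset.sum_congr rfl fun y' _ => this y', ← Finset.mul_sum, hW1, mul_one]

end Joint

end Conv
namespace Conv

open Finset Function

section Main

variable {𝒳₁ 𝒳₂ 𝒮 𝒴 : Type} [Fintype 𝒳₁] [Fintype 𝒳₂] [Fintype 𝒮] [Fintype 𝒴]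

/-- Time-sharing mixture of two conditional pmfs `p(u,x₁|s)`. -/
noncomputable def mixU {𝒰₁ 𝒰₂ : Type} (a b : ℝ)
    (p₁ : 𝒮 → 𝒰₁ × 𝒳₁ → ℝ) (p₂ : 𝒮 → 𝒰₂ × 𝒳₁ → ℝ) :
    𝒮 → (𝒰₁ ⊕ 𝒰₂) × 𝒳₁ → ℝ :=
  fun s q => Sum.elim (fun u => a * p₁ s (u, q.2)) (fun u => b * p₂ s (u, q.2)) q.1

lemma prodMap_ne {α β γ δ : Type} {f : β → δ} {g : γ → δ} (h : ∀ x y, f x ≠ g y) :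
    ∀ (p : α × β) (q : α × γ), Prod.map id f p ≠ Prod.map id g q := by
  intro p q hc
  apply h p.2 q.2
  have := congrArg Prod.snd hc
  simpa using this

lemma inl_ne_inr {U₁ U₂ : Type} : ∀ (x : U₁) (y : U₂),
    (Sum.inl x : U₁ ⊕ U₂) ≠ Sum.inr y := fun _ _ h => nomatch h

lemma prodMapFst_ne {α β γ δ : Type} {f : β → δ} {g : γ → δ} (h : ∀ x y, f x ≠ g y) :
    ∀ (p : β × α) (q : γ × α), Prod.map f id p ≠ Prod.map g id q := by
  intro p q hc
  apply h p.1 q.1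
  have := congrArg Prod.fst hc
  simpa using this

lemma regionConds_mix {𝒰₁ 𝒰₂ : Type} [Fintype 𝒰₁] [Fintype 𝒰₂]
    (PS : 𝒮 → ℝ) (hPS : IsPMF PS)
    (W : 𝒳₁ → 𝒳₂ → 𝒮 → 𝒴 → ℝ) (hW : ∀ x1 x2 s, IsPMF (W x1 x2 s))
    (C12 R1 R2 R1' R2' a b : ℝ)
    (ha : 0 < a) (hb : 0 < b) (hab : a + b = 1)
    (p₁ : 𝒮 → 𝒰₁ × 𝒳₁ → ℝ) (px₁ : 𝒰₁ → 𝒳₂ → ℝ)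
    (p₂ : 𝒮 → 𝒰₂ × 𝒳₁ → ℝ) (px₂ : 𝒰₂ → 𝒳₂ → ℝ)
    (h₁ : RegionConds PS W C12 R1 R2 p₁ px₁)
    (h₂ : RegionConds PS W C12 R1' R2' p₂ px₂) :
    RegionConds PS W C12 (a * R1 + b * R1') (a * R2 + b * R2')
      (mixU a b p₁ p₂) (Sum.elim px₁ px₂) := by
  obtain ⟨hU1n, hU1s, hX1n, hX1s, hC1, hr11, hr21, hs1⟩ := h₁
  obtain ⟨hU2n, hU2s, hX2n, hX2s, hC2, hr12, hr22, hs2⟩ := h₂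
  have hW1 : ∀ x1 x2 s, ∑ y, W x1 x2 s y = 1 := fun x1 x2 s => (hW x1 x2 s).2
  have hWn : ∀ x1 x2 s y, 0 ≤ W x1 x2 s y := fun x1 x2 s y => (hW x1 x2 s).1 y
  set μm := jointPMF PS W (mixU a b p₁ p₂) (Sum.elim px₁ px₂) with hμm
  set μ1 := jointPMF PS W p₁ px₁ with hμ1
  set μ2 := jointPMF PS W p₂ px₂ with hμ2
  -- pmf facts for the components
  have hμ1n : ∀ ω, 0 ≤ μ1 ω := jointPMF_nonneg hPS.1 hWn hU1n hX1n
  have hμ2n : ∀ ω, 0 ≤ μ2 ω := jointPMF_nonneg hPS.1 hWn hU2n hX2n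
  have hμ1sum : ∑ ω, μ1 ω = 1 := jointPMF_sum hU1s hX1s hW1 hPS.2
  have hμ2sum : ∑ ω, μ2 ω = 1 := jointPMF_sum hU2s hX2s hW1 hPS.2
  -- the mixture identity at the level of sample points
  have key1 : ∀ ω : 𝒮 × 𝒰₁ × 𝒳₁ × 𝒳₂ × 𝒴,
      μm (ω.1, Sum.inl ω.2.1, ω.2.2) = a * μ1 ω := by
    intro ω
    simp only [hμm, hμ1, jointPMF, mixU, Sum.elim_inl]
    ring
  have key2 : ∀ ω : 𝒮 × 𝒰₂ × 𝒳₁ × 𝒳₂ × 𝒴,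
      μm (ω.1, Sum.inr ω.2.1, ω.2.2) = b * μ2 ω := by
    intro ω
    simp only [hμm, hμ2, jointPMF, mixU, Sum.elim_inr]
    ring
  -- the equivalence splitting the mixed sample space
  let eqv : ((𝒮 × 𝒰₁ × 𝒳₁ × 𝒳₂ × 𝒴) ⊕ (𝒮 × 𝒰₂ × 𝒳₁ × 𝒳₂ × 𝒴))
      ≃ (𝒮 × (𝒰₁ ⊕ 𝒰₂) × 𝒳₁ × 𝒳₂ × 𝒴) :=
    { toFun := Sum.elim (fun ω => (ω.1, Sum.inl ω.2.1, ω.2.2))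
        (fun ω => (ω.1, Sum.inr ω.2.1, ω.2.2))
      invFun := fun ω => Sum.elim (fun u => Sum.inl (ω.1, u, ω.2.2))
        (fun u => Sum.inr (ω.1, u, ω.2.2)) ω.2.1
      left_inv := by rintro (⟨s, u, r⟩ | ⟨s, u, r⟩) <;> rfl
      right_inv := by rintro ⟨s, (u | u), r⟩ <;> rfl }
  have hmix : ∀ (A : Type) (V : (𝒮 × (𝒰₁ ⊕ 𝒰₂) × 𝒳₁ × 𝒳₂ × 𝒴) → A) (v : A),
      pr μm V v = a * pr μ1 (fun ω => V (ω.1, Sum.inl ω.2.1, ω.2.2)) v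
        + b * pr μ2 (fun ω => V (ω.1, Sum.inr ω.2.1, ω.2.2)) v := by
    intro A V v
    unfold pr
    rw [← Equiv.sum_comp eqv (fun ω => if V ω = v then μm ω else 0), Fintype.sum_sum_type]
    congr 1
    · rw [Finset.mul_sum]
      refine Finset.sum_congr rfl fun ω _ => ?_
      show (if V (ω.1, Sum.inl ω.2.1, ω.2.2) = v then μm (ω.1, Sum.inl ω.2.1, ω.2.2) else 0)
        = a * if V (ω.1, Sum.inl ω.2.1, ω.2.2) = v then μ1 ω else 0
      rw [key1]
      split <;> simp
    · rw [Finset.mul_sum]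
      refine Finset.sum_congr rfl fun ω _ => ?_
      show (if V (ω.1, Sum.inr ω.2.1, ω.2.2) = v then μm (ω.1, Sum.inr ω.2.1, ω.2.2) else 0)
        = b * if V (ω.1, Sum.inr ω.2.1, ω.2.2) = v then μ2 ω else 0
      rw [key2]
      split <;> simp
  -- abbreviation for the entropy defect constant
  set c : ℝ := a * Real.logb 2 a + b * Real.logb 2 b with hc
  have hinl : Injective (@Sum.inl 𝒰₁ 𝒰₂) := Sum.inl_injective
  have hinr : Injective (@Sum.inr 𝒰₁ 𝒰₂) := Sum.inr_injective
  have hid : Injective (@id 𝒳₁) := injective_id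
  -- entropy of S (identical marginal PS)
  have hprS1 : ∀ v, pr μ1 (fun q : 𝒮 × 𝒰₁ × 𝒳₁ × 𝒳₂ × 𝒴 => q.1) v = PS v :=
    fun v => pr_jointPMF_fst hU1s hX1s hW1 v
  have hprS2 : ∀ v, pr μ2 (fun q : 𝒮 × 𝒰₂ × 𝒳₁ × 𝒳₂ × 𝒴 => q.1) v = PS v :=
    fun v => pr_jointPMF_fst hU2s hX2s hW1 v
  have hS : ent μm (fun q => q.1)
      = a * ent μ1 (fun q => q.1) + b * ent μ2 (fun q => q.1) :=
    ent_mix_of_eq hmix hab (fun q => q.1) (fun v => by rw [hprS1 v, hprS2 v])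
  -- entropy splittings (all variables containing the U-coordinate)
  -- 1) U itself
  have hU : ent μm (fun q => q.2.1)
      = a * ent μ1 (fun q => q.2.1) + b * ent μ2 (fun q => q.2.1) - c :=
    ent_mix_split hmix ha hb hμ1n hμ1sum hμ2n hμ2sum _
      (fun q => q.2.1) (fun q => q.2.1) Sum.inl Sum.inr
      hinl hinr inl_ne_inr (fun ω => rfl) (fun ω => rfl)
  -- 2) (U, S)
  have hUS : ent μm (fun q => (q.2.1, q.1))
      = a * ent μ1 (fun q => (q.2.1, q.1)) + b * ent μ2 (fun q => (q.2.1, q.1)) - c :=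
    ent_mix_split hmix ha hb hμ1n hμ1sum hμ2n hμ2sum _
      (fun q => (q.2.1, q.1)) (fun q => (q.2.1, q.1))
      (Prod.map Sum.inl id) (Prod.map Sum.inr id)
      (hinl.prodMap injective_id) (hinr.prodMap injective_id)
      (prodMapFst_ne inl_ne_inr) (fun ω => rfl) (fun ω => rfl)

  -- 3-6) the four entropies of cmi(X1;Y|X2,S,U)
  have hA1 : ent μm (fun q => (q.2.2.1, q.2.2.2.1, q.1, q.2.1))
      = a * ent μ1 (fun q => (q.2.2.1, q.2.2.2.1, q.1, q.2.1))
        + b * ent μ2 (fun q => (q.2.2.1, q.2.2.2.1, q.1, q.2.1)) - c :=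
    ent_mix_split hmix ha hb hμ1n hμ1sum hμ2n hμ2sum _ _ _
      (Prod.map id (Prod.map id (Prod.map id Sum.inl)))
      (Prod.map id (Prod.map id (Prod.map id Sum.inr)))
      (injective_id.prodMap (injective_id.prodMap (injective_id.prodMap hinl)))
      (injective_id.prodMap (injective_id.prodMap (injective_id.prodMap hinr)))
      (prodMap_ne (prodMap_ne (prodMap_ne inl_ne_inr))) (fun ω => rfl) (fun ω => rfl)
  have hB1 : ent μm (fun q => (q.2.2.2.2, q.2.2.2.1, q.1, q.2.1))
      = a * ent μ1 (fun q => (q.2.2.2.2, q.2.2.2.1, q.1, q.2.1))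
        + b * ent μ2 (fun q => (q.2.2.2.2, q.2.2.2.1, q.1, q.2.1)) - c :=
    ent_mix_split hmix ha hb hμ1n hμ1sum hμ2n hμ2sum _ _ _
      (Prod.map id (Prod.map id (Prod.map id Sum.inl)))
      (Prod.map id (Prod.map id (Prod.map id Sum.inr)))
      (injective_id.prodMap (injective_id.prodMap (injective_id.prodMap hinl)))
      (injective_id.prodMap (injective_id.prodMap (injective_id.prodMap hinr)))
      (prodMap_ne (prodMap_ne (prodMap_ne inl_ne_inr))) (fun ω => rfl) (fun ω => rfl)
  have hC1e : ent μm (fun q => (q.2.2.1, q.2.2.2.2, q.2.2.2.1, q.1, q.2.1))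
      = a * ent μ1 (fun q => (q.2.2.1, q.2.2.2.2, q.2.2.2.1, q.1, q.2.1))
        + b * ent μ2 (fun q => (q.2.2.1, q.2.2.2.2, q.2.2.2.1, q.1, q.2.1)) - c :=
    ent_mix_split hmix ha hb hμ1n hμ1sum hμ2n hμ2sum _ _ _
      (Prod.map id (Prod.map id (Prod.map id (Prod.map id Sum.inl))))
      (Prod.map id (Prod.map id (Prod.map id (Prod.map id Sum.inr))))
      (injective_id.prodMap (injective_id.prodMap (injective_id.prodMap
        (injective_id.prodMap hinl))))
      (injective_id.prodMap (injective_id.prodMap (injective_id.prodMap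
        (injective_id.prodMap hinr))))
      (prodMap_ne (prodMap_ne (prodMap_ne (prodMap_ne inl_ne_inr))))
      (fun ω => rfl) (fun ω => rfl)
  have hD1 : ent μm (fun q => (q.2.2.2.1, q.1, q.2.1))
      = a * ent μ1 (fun q => (q.2.2.2.1, q.1, q.2.1))
        + b * ent μ2 (fun q => (q.2.2.2.1, q.1, q.2.1)) - c :=
    ent_mix_split hmix ha hb hμ1n hμ1sum hμ2n hμ2sum _ _ _
      (Prod.map id (Prod.map id Sum.inl)) (Prod.map id (Prod.map id Sum.inr))
      (injective_id.prodMap (injective_id.prodMap hinl))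
      (injective_id.prodMap (injective_id.prodMap hinr))
      (prodMap_ne (prodMap_ne inl_ne_inr)) (fun ω => rfl) (fun ω => rfl)
  -- the four entropies of cmi(X2;Y|X1,S,U)
  have hA2 : ent μm (fun q => (q.2.2.2.1, q.2.2.1, q.1, q.2.1))
      = a * ent μ1 (fun q => (q.2.2.2.1, q.2.2.1, q.1, q.2.1))
        + b * ent μ2 (fun q => (q.2.2.2.1, q.2.2.1, q.1, q.2.1)) - c :=
    ent_mix_split hmix ha hb hμ1n hμ1sum hμ2n hμ2sum _ _ _
      (Prod.map id (Prod.map id (Prod.map id Sum.inl)))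
      (Prod.map id (Prod.map id (Prod.map id Sum.inr)))
      (injective_id.prodMap (injective_id.prodMap (injective_id.prodMap hinl)))
      (injective_id.prodMap (injective_id.prodMap (injective_id.prodMap hinr)))
      (prodMap_ne (prodMap_ne (prodMap_ne inl_ne_inr))) (fun ω => rfl) (fun ω => rfl)
  have hB2 : ent μm (fun q => (q.2.2.2.2, q.2.2.1, q.1, q.2.1))
      = a * ent μ1 (fun q => (q.2.2.2.2, q.2.2.1, q.1, q.2.1))
        + b * ent μ2 (fun q => (q.2.2.2.2, q.2.2.1, q.1, q.2.1)) - c :=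
    ent_mix_split hmix ha hb hμ1n hμ1sum hμ2n hμ2sum _ _ _
      (Prod.map id (Prod.map id (Prod.map id Sum.inl)))
      (Prod.map id (Prod.map id (Prod.map id Sum.inr)))
      (injective_id.prodMap (injective_id.prodMap (injective_id.prodMap hinl)))
      (injective_id.prodMap (injective_id.prodMap (injective_id.prodMap hinr)))
      (prodMap_ne (prodMap_ne (prodMap_ne inl_ne_inr))) (fun ω => rfl) (fun ω => rfl)
  have hC2e : ent μm (fun q => (q.2.2.2.1, q.2.2.2.2, q.2.2.1, q.1, q.2.1))
      = a * ent μ1 (fun q => (q.2.2.2.1, q.2.2.2.2, q.2.2.1, q.1, q.2.1))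
        + b * ent μ2 (fun q => (q.2.2.2.1, q.2.2.2.2, q.2.2.1, q.1, q.2.1)) - c :=
    ent_mix_split hmix ha hb hμ1n hμ1sum hμ2n hμ2sum _ _ _
      (Prod.map id (Prod.map id (Prod.map id (Prod.map id Sum.inl))))
      (Prod.map id (Prod.map id (Prod.map id (Prod.map id Sum.inr))))
      (injective_id.prodMap (injective_id.prodMap (injective_id.prodMap
        (injective_id.prodMap hinl))))
      (injective_id.prodMap (injective_id.prodMap (injective_id.prodMap
        (injective_id.prodMap hinr))))
      (prodMap_ne (prodMap_ne (prodMap_ne (prodMap_ne inl_ne_inr))))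
      (fun ω => rfl) (fun ω => rfl)
  have hD2 : ent μm (fun q => (q.2.2.1, q.1, q.2.1))
      = a * ent μ1 (fun q => (q.2.2.1, q.1, q.2.1))
        + b * ent μ2 (fun q => (q.2.2.1, q.1, q.2.1)) - c :=
    ent_mix_split hmix ha hb hμ1n hμ1sum hμ2n hμ2sum _ _ _
      (Prod.map id (Prod.map id Sum.inl)) (Prod.map id (Prod.map id Sum.inr))
      (injective_id.prodMap (injective_id.prodMap hinl))
      (injective_id.prodMap (injective_id.prodMap hinr))
      (prodMap_ne (prodMap_ne inl_ne_inr)) (fun ω => rfl) (fun ω => rfl)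
  -- the four entropies of cmi(X1,X2;Y|S,U)
  have hA3 : ent μm (fun q => ((q.2.2.1, q.2.2.2.1), q.1, q.2.1))
      = a * ent μ1 (fun q => ((q.2.2.1, q.2.2.2.1), q.1, q.2.1))
        + b * ent μ2 (fun q => ((q.2.2.1, q.2.2.2.1), q.1, q.2.1)) - c :=
    ent_mix_split hmix ha hb hμ1n hμ1sum hμ2n hμ2sum _ _ _
      (Prod.map id (Prod.map id Sum.inl)) (Prod.map id (Prod.map id Sum.inr))
      (injective_id.prodMap (injective_id.prodMap hinl))
      (injective_id.prodMap (injective_id.prodMap hinr))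
      (prodMap_ne (prodMap_ne inl_ne_inr)) (fun ω => rfl) (fun ω => rfl)
  have hB3 : ent μm (fun q => (q.2.2.2.2, q.1, q.2.1))
      = a * ent μ1 (fun q => (q.2.2.2.2, q.1, q.2.1))
        + b * ent μ2 (fun q => (q.2.2.2.2, q.1, q.2.1)) - c :=
    ent_mix_split hmix ha hb hμ1n hμ1sum hμ2n hμ2sum _ _ _
      (Prod.map id (Prod.map id Sum.inl)) (Prod.map id (Prod.map id Sum.inr))
      (injective_id.prodMap (injective_id.prodMap hinl))
      (injective_id.prodMap (injective_id.prodMap hinr))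
      (prodMap_ne (prodMap_ne inl_ne_inr)) (fun ω => rfl) (fun ω => rfl)
  have hC3e : ent μm (fun q => ((q.2.2.1, q.2.2.2.1), q.2.2.2.2, q.1, q.2.1))
      = a * ent μ1 (fun q => ((q.2.2.1, q.2.2.2.1), q.2.2.2.2, q.1, q.2.1))
        + b * ent μ2 (fun q => ((q.2.2.1, q.2.2.2.1), q.2.2.2.2, q.1, q.2.1)) - c :=
    ent_mix_split hmix ha hb hμ1n hμ1sum hμ2n hμ2sum _ _ _
      (Prod.map id (Prod.map id (Prod.map id Sum.inl)))
      (Prod.map id (Prod.map id (Prod.map id Sum.inr)))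
      (injective_id.prodMap (injective_id.prodMap (injective_id.prodMap hinl)))
      (injective_id.prodMap (injective_id.prodMap (injective_id.prodMap hinr)))
      (prodMap_ne (prodMap_ne (prodMap_ne inl_ne_inr))) (fun ω => rfl) (fun ω => rfl)
  have hD3 : ent μm (fun q => (q.1, q.2.1))
      = a * ent μ1 (fun q => (q.1, q.2.1)) + b * ent μ2 (fun q => (q.1, q.2.1)) - c :=
    ent_mix_split hmix ha hb hμ1n hμ1sum hμ2n hμ2sum _ _ _
      (Prod.map id Sum.inl) (Prod.map id Sum.inr)
      (injective_id.prodMap hinl) (injective_id.prodMap hinr)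
      (prodMap_ne inl_ne_inr) (fun ω => rfl) (fun ω => rfl)
  -- combined identities for the mutual informations
  have h_mi : mi μm (fun q => q.2.1) (fun q => q.1)
      = a * mi μ1 (fun q => q.2.1) (fun q => q.1)
        + b * mi μ2 (fun q => q.2.1) (fun q => q.1) := by
    simp only [mi]
    rw [hU, hS, hUS]
    ring
  have h_cmi1 : cmi μm (fun q => q.2.2.1) (fun q => q.2.2.2.2)
        (fun q => (q.2.2.2.1, q.1, q.2.1))
      = a * cmi μ1 (fun q => q.2.2.1) (fun q => q.2.2.2.2) (fun q => (q.2.2.2.1, q.1, q.2.1))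
        + b * cmi μ2 (fun q => q.2.2.1) (fun q => q.2.2.2.2)
            (fun q => (q.2.2.2.1, q.1, q.2.1)) := by
    simp only [cmi]
    rw [hA1, hB1, hC1e, hD1]
    ring
  have h_cmi2 : cmi μm (fun q => q.2.2.2.1) (fun q => q.2.2.2.2)
        (fun q => (q.2.2.1, q.1, q.2.1))
      = a * cmi μ1 (fun q => q.2.2.2.1) (fun q => q.2.2.2.2) (fun q => (q.2.2.1, q.1, q.2.1))
        + b * cmi μ2 (fun q => q.2.2.2.1) (fun q => q.2.2.2.2)
            (fun q => (q.2.2.1, q.1, q.2.1)) := by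
    simp only [cmi]
    rw [hA2, hB2, hC2e, hD2]
    ring
  have h_cmi3 : cmi μm (fun q => (q.2.2.1, q.2.2.2.1)) (fun q => q.2.2.2.2)
        (fun q => (q.1, q.2.1))
      = a * cmi μ1 (fun q => (q.2.2.1, q.2.2.2.1)) (fun q => q.2.2.2.2) (fun q => (q.1, q.2.1))
        + b * cmi μ2 (fun q => (q.2.2.1, q.2.2.2.1)) (fun q => q.2.2.2.2)
            (fun q => (q.1, q.2.1)) := by
    simp only [cmi]
    rw [hA3, hB3, hC3e, hD3]
    ring
  -- the channel-based concavity bound for cmi(X1,X2;Y|S)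
  have hmixUn : ∀ s q, 0 ≤ mixU a b p₁ p₂ s q := by
    intro s q
    obtain ⟨u | u, x1⟩ := q
    · exact mul_nonneg ha.le (hU1n s (u, x1))
    · exact mul_nonneg hb.le (hU2n s (u, x1))
  have hmixXn : ∀ u x, 0 ≤ Sum.elim px₁ px₂ u x := by
    rintro (u | u) x
    · exact hX1n u x
    · exact hX2n u x
  have hμmn : ∀ ω, 0 ≤ μm ω := jointPMF_nonneg hPS.1 hWn hmixUn hmixXn
  set K : (𝒳₁ × 𝒳₂) × 𝒮 → 𝒴 → ℝ := fun x yy => W x.1.1 x.1.2 x.2 yy with hK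
  set ct : (𝒳₁ × 𝒳₂) × 𝒮 → ℝ := fun x => ∑ yy, K x yy * Real.logb 2 (K x yy) with hct
  have hch : ∀ (𝒰' : Type) [Fintype 𝒰'] (pU' : 𝒮 → 𝒰' × 𝒳₁ → ℝ) (pX' : 𝒰' → 𝒳₂ → ℝ),
      (∀ ω, 0 ≤ jointPMF PS W pU' pX' ω) →
      ent (jointPMF PS W pU' pX') (fun q => ((q.2.2.1, q.2.2.2.1), q.2.2.2.2, q.1))
        = ent (jointPMF PS W pU' pX') (fun q => ((q.2.2.1, q.2.2.2.1), q.1))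
          - ∑ x, pr (jointPMF PS W pU' pX') (fun q => ((q.2.2.1, q.2.2.2.1), q.1)) x * ct x := by
    intro 𝒰' i pU' pX' hn
    rw [ent_eq_entH, ent_eq_entH]
    exact entH_channel _ _ K (fun x => hW1 x.1.1 x.1.2 x.2) (pr_nonneg hn _)
      (fun x yy => hWn x.1.1 x.1.2 x.2 yy)
      (fun aa bb cc => pr_jointPMF_channel hW1 aa.1 aa.2 bb cc)
  have hchm : ent μm (fun q => ((q.2.2.1, q.2.2.2.1), q.2.2.2.2, q.1))
      = ent μm (fun q => ((q.2.2.1, q.2.2.2.1), q.1))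
        - ∑ x, pr μm (fun q => ((q.2.2.1, q.2.2.2.1), q.1)) x * ct x :=
    hch (𝒰₁ ⊕ 𝒰₂) (mixU a b p₁ p₂) (Sum.elim px₁ px₂) hμmn
  have hch1 : ent μ1 (fun q => ((q.2.2.1, q.2.2.2.1), q.2.2.2.2, q.1))
      = ent μ1 (fun q => ((q.2.2.1, q.2.2.2.1), q.1))
        - ∑ x, pr μ1 (fun q => ((q.2.2.1, q.2.2.2.1), q.1)) x * ct x :=
    hch 𝒰₁ p₁ px₁ hμ1n
  have hch2 : ent μ2 (fun q => ((q.2.2.1, q.2.2.2.1), q.2.2.2.2, q.1))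
      = ent μ2 (fun q => ((q.2.2.1, q.2.2.2.1), q.1))
        - ∑ x, pr μ2 (fun q => ((q.2.2.1, q.2.2.2.1), q.1)) x * ct x :=
    hch 𝒰₂ p₂ px₂ hμ2n
  have hXZmix : ∀ v, pr μm (fun q => ((q.2.2.1, q.2.2.2.1), q.1)) v
      = a * pr μ1 (fun q => ((q.2.2.1, q.2.2.2.1), q.1)) v
        + b * pr μ2 (fun q => ((q.2.2.1, q.2.2.2.1), q.1)) v :=
    fun v => hmix _ (fun q => ((q.2.2.1, q.2.2.2.1), q.1)) v
  have hCT : ∑ x, pr μm (fun q => ((q.2.2.1, q.2.2.2.1), q.1)) x * ct x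
      = a * (∑ x, pr μ1 (fun q => ((q.2.2.1, q.2.2.2.1), q.1)) x * ct x)
        + b * (∑ x, pr μ2 (fun q => ((q.2.2.1, q.2.2.2.1), q.1)) x * ct x) := by
    rw [Finset.mul_sum, Finset.mul_sum, ← Finset.sum_add_distrib]
    exact Finset.sum_congr rfl fun x _ => by rw [hXZmix x]; ring
  have hYZ : a * ent μ1 (fun q => (q.2.2.2.2, q.1)) + b * ent μ2 (fun q => (q.2.2.2.2, q.1))
      ≤ ent μm (fun q => (q.2.2.2.2, q.1)) :=
    ent_mix_ge hmix ha.le hb.le hab hμ1n hμ2n (fun q => (q.2.2.2.2, q.1))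
  have h_cmi4 : a * cmi μ1 (fun q => (q.2.2.1, q.2.2.2.1)) (fun q => q.2.2.2.2) (fun q => q.1)
        + b * cmi μ2 (fun q => (q.2.2.1, q.2.2.2.1)) (fun q => q.2.2.2.2) (fun q => q.1)
      ≤ cmi μm (fun q => (q.2.2.1, q.2.2.2.1)) (fun q => q.2.2.2.2) (fun q => q.1) := by
    simp only [cmi]
    rw [hchm, hch1, hch2]
    linarith [hYZ, hS, hCT]
  -- assembling the region conditions
  have hCm : a * C12 + b * C12 = C12 := by rw [← add_mul, hab, one_mul]
  refine ⟨hmixUn, ?_, hmixXn, ?_, ?_, ?_, ?_, ?_⟩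
  · intro s
    rw [Fintype.sum_prod_type, Fintype.sum_sum_type]
    simp only [mixU, Sum.elim_inl, Sum.elim_inr]
    have e1 : ∑ u : 𝒰₁, ∑ x1, a * p₁ s (u, x1) = a := by
      have h := hU1s s
      rw [Fintype.sum_prod_type] at h
      calc ∑ u : 𝒰₁, ∑ x1, a * p₁ s (u, x1) = a * ∑ u : 𝒰₁, ∑ x1, p₁ s (u, x1) := by
            rw [Finset.mul_sum]
            exact Finset.sum_congr rfl fun u _ => by rw [Finset.mul_sum]
        _ = a := by rw [h, mul_one]
    have e2 : ∑ u : 𝒰₂, ∑ x1, b * p₂ s (u, x1) = b := by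
      have h := hU2s s
      rw [Fintype.sum_prod_type] at h
      calc ∑ u : 𝒰₂, ∑ x1, b * p₂ s (u, x1) = b * ∑ u : 𝒰₂, ∑ x1, p₂ s (u, x1) := by
            rw [Finset.mul_sum]
            exact Finset.sum_congr rfl fun u _ => by rw [Finset.mul_sum]
        _ = b := by rw [h, mul_one]
    rw [e1, e2, hab]
  · rintro (u | u)
    · exact hX1s u
    · exact hX2s u
  · rw [← hμm, ge_iff_le, h_mi]
    have t1 := mul_le_mul_of_nonneg_left hC1 ha.le
    have t2 := mul_le_mul_of_nonneg_left hC2 hb.le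
    linarith
  · rw [← hμm, h_cmi1, h_mi]
    have t1 := mul_le_mul_of_nonneg_left hr11 ha.le
    have t2 := mul_le_mul_of_nonneg_left hr12 hb.le
    linarith
  · rw [← hμm, h_cmi2]
    have t1 := mul_le_mul_of_nonneg_left hr21 ha.le
    have t2 := mul_le_mul_of_nonneg_left hr22 hb.le
    linarith
  · have u1 := (le_min_iff.mp hs1).1
    have u2 := (le_min_iff.mp hs1).2
    have v1 := (le_min_iff.mp hs2).1
    have v2 := (le_min_iff.mp hs2).2
    rw [← hμm]
    refine le_min ?_ ?_
    · rw [h_cmi3, h_mi]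
      have t1 := mul_le_mul_of_nonneg_left u1 ha.le
      have t2 := mul_le_mul_of_nonneg_left v1 hb.le
      linarith
    · have t1 := mul_le_mul_of_nonneg_left u2 ha.le
      have t2 := mul_le_mul_of_nonneg_left v2 hb.le
      linarith [h_cmi4]

end Main

end Conv

/-- **Lemma 1, part 1**: for fixed finite alphabets, state pmf `PS`, channel `W`, and
cooperation capacity `C₁₂ ≥ 0`, the rate region of the one-way cooperating MAC — the set
of pairs `(R₁,R₂) ∈ ℝ≥0²` for which there exist a finite auxiliary alphabet `𝒰` and a
joint pmf of the form `P(s)p(u,x₁|s)p(x₂|u)P(y|x₁,x₂,s)` satisfying the single-letter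
constraints — is a convex subset of `ℝ²`. -/
theorem region_one_way_cooperation_convex
    {𝒳₁ 𝒳₂ 𝒮 𝒴 : Type} [Fintype 𝒳₁] [Fintype 𝒳₂] [Fintype 𝒮] [Fintype 𝒴]
    (PS : 𝒮 → ℝ) (hPS : IsPMF PS)
    (W : 𝒳₁ → 𝒳₂ → 𝒮 → 𝒴 → ℝ)
    (hW : ∀ x1 x2 s, IsPMF (W x1 x2 s))
    (C12 : ℝ) (hC12 : 0 ≤ C12) :
    Convex ℝ {p : ℝ × ℝ | 0 ≤ p.1 ∧ 0 ≤ p.2 ∧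
      ∃ (𝒰 : Type) (_ : Fintype 𝒰) (pUX1 : 𝒮 → 𝒰 × 𝒳₁ → ℝ) (pX2 : 𝒰 → 𝒳₂ → ℝ),
        RegionConds PS W C12 p.1 p.2 pUX1 pX2} := by
  rintro p hp q hq a b ha hb hab
  rcases eq_or_lt_of_le ha with h0 | ha'
  · have hb1 : b = 1 := by linarith
    rw [← h0, hb1, zero_smul, one_smul, zero_add]
    exact hq
  rcases eq_or_lt_of_le hb with h0 | hb'
  · have ha1 : a = 1 := by linarith
    rw [← h0, ha1, zero_smul, one_smul, add_zero]
    exact hp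
  obtain ⟨hR1, hR2, 𝒰₁, i₁, p₁, px₁, hc₁⟩ := hp
  obtain ⟨hR1', hR2', 𝒰₂, i₂, p₂, px₂, hc₂⟩ := hq
  letI := i₁
  letI := i₂
  have hpt : a • p + b • q = (a * p.1 + b * q.1, a * p.2 + b * q.2) := by
    apply Prod.ext <;> simp [smul_eq_mul]
  rw [Set.mem_setOf_eq, hpt]
  exact ⟨add_nonneg (mul_nonneg ha'.le hR1) (mul_nonneg hb'.le hR1'),
    add_nonneg (mul_nonneg ha'.le hR2) (mul_nonneg hb'.le hR2'),
    𝒰₁ ⊕ 𝒰₂, inferInstance, Conv.mixU a b p₁ p₂, Sum.elim px₁ px₂,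
    Conv.regionConds_mix PS hPS W hW C12 p.1 p.2 q.1 q.2 a b ha' hb' hab
      p₁ px₁ p₂ px₂ hc₁ hc₂⟩


end Paper
end

section
/- (Joint typicality lemma) For every joint pmf P_{X,Y,Z} on finite sets 𝒳×𝒴×𝒵 there exists a function δ(ε) with δ(ε) → 0 as ε → 0 such that for all n, all ε > 0, and all pairs of sequences (x^n,y^n) ∈ T_ε^{(n)}(X,Y): if Z̃^n = (Z̃_1,…,Z̃_n) has independent components with Z̃_i ∼ P_{Z|X}(·|x_i), then Pr{(x^n,y^n,Z̃^n) ∈ T_ε^{(n)}(X,Y,Z)} ≤ 2^{−n(I(Y;Z|X) − δ(ε))}. -/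
open scoped BigOperators Classical
open Finset

namespace Paper

variable {Ω : Type} [Fintype Ω]

/-- Empirical frequency of the symbol `a` in the `n`-sequence `f`. -/
noncomputable def empFreq {A : Type} {n : ℕ} (f : Fin n → A) (a : A) : ℝ :=
  ((Finset.univ.filter fun i => f i = a).card : ℝ) / n

/-- The `n`-sequence `f` is strongly `ε`-typical with respect to the pmf `q`:
`|(1/n)·N(a|f) − q(a)| ≤ ε·q(a)` for every symbol `a`. -/
def StronglyTypical {A : Type} {n : ℕ} (q : A → ℝ) (ε : ℝ) (f : Fin n → A) : Prop :=
  ∀ a, |empFreq f a - q a| ≤ ε * q a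


section JTAux

private lemma sum_mul_logb_pr {A : Type} [Fintype A] (μ : Ω → ℝ) (f : Ω → A) :
    ∑ ω, μ ω * Real.logb 2 (pr μ f (f ω)) = - ent μ f := by
  rw [ent, neg_neg]
  rw [← Finset.sum_fiberwise Finset.univ f (fun ω => μ ω * Real.logb 2 (pr μ f (f ω)))]
  refine Finset.sum_congr rfl fun a _ => ?_
  have h1 : ∀ ω ∈ Finset.univ.filter (fun ω => f ω = a),
      μ ω * Real.logb 2 (pr μ f (f ω)) = μ ω * Real.logb 2 (pr μ f a) := by
    intro ω hω
    rw [(Finset.mem_filter.mp hω).2]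
  rw [Finset.sum_congr rfl h1, ← Finset.sum_mul]
  congr 1
  simp [pr, Finset.sum_filter]

private lemma pr_zx {𝒳 𝒴 𝒵 : Type} [Fintype 𝒳] [Fintype 𝒴] [Fintype 𝒵]
    (p : 𝒳 × 𝒴 × 𝒵 → ℝ) (u : 𝒳) (w : 𝒵) :
    pr p (fun q => (q.2.2, q.1)) (w, u) = ∑ b, p (u, b, w) := by
  simp only [pr, Fintype.sum_prod_type, Prod.mk.injEq, ite_and]
  show (∑ a : 𝒳, ∑ b : 𝒴, ∑ c : 𝒵, if c = w then if a = u then p (a, b, c) else 0 else 0) = _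
  simp only [Finset.sum_ite_irrel, Finset.sum_const_zero, Finset.sum_ite_eq,
    Finset.sum_ite_eq', Finset.mem_univ, if_true]

private lemma pr_yx {𝒳 𝒴 𝒵 : Type} [Fintype 𝒳] [Fintype 𝒴] [Fintype 𝒵]
    (p : 𝒳 × 𝒴 × 𝒵 → ℝ) (u : 𝒳) (v : 𝒴) :
    pr p (fun q => (q.2.1, q.1)) (v, u) = ∑ c, p (u, v, c) := by
  simp only [pr, Fintype.sum_prod_type, Prod.mk.injEq, ite_and]
  show (∑ a : 𝒳, ∑ b : 𝒴, ∑ c : 𝒵, if b = v then if a = u then p (a, b, c) else 0 else 0) = _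
  simp only [Finset.sum_ite_irrel, Finset.sum_const_zero, Finset.sum_ite_eq,
    Finset.sum_ite_eq', Finset.mem_univ, if_true]

private lemma pr_x {𝒳 𝒴 𝒵 : Type} [Fintype 𝒳] [Fintype 𝒴] [Fintype 𝒵]
    (p : 𝒳 × 𝒴 × 𝒵 → ℝ) (u : 𝒳) :
    pr p (fun q => q.1) u = ∑ bc : 𝒴 × 𝒵, p (u, bc.1, bc.2) := by
  simp only [pr, Fintype.sum_prod_type, Prod.mk.injEq, ite_and]
  show (∑ a : 𝒳, ∑ b : 𝒴, ∑ c : 𝒵, if a = u then p (a, b, c) else 0) = _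
  simp only [Finset.sum_ite_irrel, Finset.sum_const_zero, Finset.sum_ite_eq,
    Finset.sum_ite_eq', Finset.mem_univ, if_true]

private lemma pr_yzx {𝒳 𝒴 𝒵 : Type} [Fintype 𝒳] [Fintype 𝒴] [Fintype 𝒵]
    (p : 𝒳 × 𝒴 × 𝒵 → ℝ) (u : 𝒳) (v : 𝒴) (w : 𝒵) :
    pr p (fun q => (q.2.1, q.2.2, q.1)) (v, w, u) = p (u, v, w) := by
  simp only [pr, Fintype.sum_prod_type, Prod.mk.injEq, ite_and]
  show (∑ a : 𝒳, ∑ b : 𝒴, ∑ c : 𝒵,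
      if b = v then if c = w then if a = u then p (a, b, c) else 0 else 0 else 0) = _
  simp only [Finset.sum_ite_irrel, Finset.sum_const_zero, Finset.sum_ite_eq,
    Finset.sum_ite_eq', Finset.mem_univ, if_true]

private lemma sum_comp_eq {A : Type} [Fintype A] {n : ℕ} (F : Fin n → A) (g : A → ℝ) :
    ∑ i, g (F i) = ∑ a, ((Finset.univ.filter fun i => F i = a).card : ℝ) * g a := by
  rw [← Finset.sum_fiberwise' Finset.univ F g]
  exact Finset.sum_congr rfl fun a _ => by rw [Finset.sum_const, nsmul_eq_mul]

private lemma sum_g_le {A : Type} [Fintype A] {n : ℕ} {q : A → ℝ} {ε : ℝ}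
    (f : Fin n → A) (ht : StronglyTypical q ε f) (g : A → ℝ) :
    ∑ i, g (f i)
      ≤ (n : ℝ) * (∑ a, q a * g a) + (n : ℝ) * ε * (∑ a, q a * |g a|) := by
  rw [sum_comp_eq f g]
  have step : ∀ a ∈ Finset.univ, ((Finset.univ.filter fun i => f i = a).card : ℝ) * g a
      ≤ (n : ℝ) * (q a * g a) + (n : ℝ) * ε * (q a * |g a|) := by
    intro a _
    have hNa : |((Finset.univ.filter fun i => f i = a).card : ℝ) - n * q a|
        ≤ (n : ℝ) * ε * q a := by
      have h1 : |empFreq f a - q a| ≤ ε * q a := ht a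
      rw [empFreq] at h1
      rcases Nat.eq_zero_or_pos n with hn | hn
      · subst hn
        simp
      · have hn' : (0:ℝ) < n := by exact_mod_cast hn
        have h2 : ((Finset.univ.filter fun i => f i = a).card : ℝ) - n * q a
            = n * (((Finset.univ.filter fun i => f i = a).card : ℝ) / n - q a) := by
          field_simp
        rw [h2, abs_mul, abs_of_pos hn']
        refine le_trans (mul_le_mul_of_nonneg_left h1 hn'.le) (le_of_eq (by ring))
    have h2 : (((Finset.univ.filter fun i => f i = a).card : ℝ) - n * q a) * g a
        ≤ |((Finset.univ.filter fun i => f i = a).card : ℝ) - n * q a| * |g a| :=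
      le_trans (le_abs_self _) (le_of_eq (abs_mul _ _))
    have h3 : |((Finset.univ.filter fun i => f i = a).card : ℝ) - n * q a| * |g a|
        ≤ (n : ℝ) * ε * q a * |g a| :=
      mul_le_mul_of_nonneg_right hNa (abs_nonneg _)
    have h4 : (((Finset.univ.filter fun i => f i = a).card : ℝ)) * g a
        = (n : ℝ) * (q a * g a)
          + (((Finset.univ.filter fun i => f i = a).card : ℝ) - n * q a) * g a := by ring
    rw [h4]
    have h5 : (n : ℝ) * ε * (q a * |g a|) = (n:ℝ) * ε * q a * |g a| := by ring
    rw [h5]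
    exact add_le_add le_rfl (le_trans h2 h3)
  refine le_trans (Finset.sum_le_sum step) (le_of_eq ?_)
  rw [Finset.sum_add_distrib, ← Finset.mul_sum, ← Finset.mul_sum]


private lemma two_rpow_sum {ι : Type} (s : Finset ι) (c : ι → ℝ) :
    (2:ℝ) ^ (∑ i ∈ s, c i) = ∏ i ∈ s, (2:ℝ) ^ (c i) := by
  induction s using Finset.cons_induction with
  | empty => simp
  | cons a s ha ih => rw [Finset.sum_cons, Finset.prod_cons, Real.rpow_add (by norm_num), ih]


private noncomputable def gfun {𝒳 𝒴 𝒵 : Type} [Fintype 𝒳] [Fintype 𝒴] [Fintype 𝒵]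
    (p : 𝒳 × 𝒴 × 𝒵 → ℝ) (a : 𝒳 × 𝒴 × 𝒵) : ℝ :=
  Real.logb 2 (∑ b, p (a.1, b, a.2.2)) + Real.logb 2 (∑ c, p (a.1, a.2.1, c))
    - Real.logb 2 (∑ bc : 𝒴 × 𝒵, p (a.1, bc.1, bc.2)) - Real.logb 2 (p a)

private lemma sum_gfun {𝒳 𝒴 𝒵 : Type} [Fintype 𝒳] [Fintype 𝒴] [Fintype 𝒵]
    (p : 𝒳 × 𝒴 × 𝒵 → ℝ) :
    ∑ a, p a * gfun p a
      = -(cmi p (fun q => q.2.1) (fun q => q.2.2) (fun q => q.1)) := by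
  have key : ∑ a, p a * gfun p a
      = (∑ a, p a * Real.logb 2 (pr p (fun q : 𝒳 × 𝒴 × 𝒵 => (q.2.2, q.1))
            ((fun q : 𝒳 × 𝒴 × 𝒵 => (q.2.2, q.1)) a)))
        + (∑ a, p a * Real.logb 2 (pr p (fun q : 𝒳 × 𝒴 × 𝒵 => (q.2.1, q.1))
            ((fun q : 𝒳 × 𝒴 × 𝒵 => (q.2.1, q.1)) a)))
        - (∑ a, p a * Real.logb 2 (pr p (fun q : 𝒳 × 𝒴 × 𝒵 => q.1)
            ((fun q : 𝒳 × 𝒴 × 𝒵 => q.1) a)))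
        - (∑ a, p a * Real.logb 2 (pr p (fun q : 𝒳 × 𝒴 × 𝒵 => (q.2.1, q.2.2, q.1))
            ((fun q : 𝒳 × 𝒴 × 𝒵 => (q.2.1, q.2.2, q.1)) a))) := by
    rw [← Finset.sum_add_distrib, ← Finset.sum_sub_distrib, ← Finset.sum_sub_distrib]
    refine Finset.sum_congr rfl fun a _ => ?_
    rw [gfun, pr_zx, pr_yx, pr_x, pr_yzx]
    ring
  rw [key, sum_mul_logb_pr, sum_mul_logb_pr, sum_mul_logb_pr, sum_mul_logb_pr, cmi]
  ring

private lemma pos_of_typical {A : Type} {n : ℕ} {q : A → ℝ} {ε : ℝ} {f : Fin n → A}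
    (ht : StronglyTypical q ε f) (i : Fin n) (h0 : 0 ≤ q (f i)) : 0 < q (f i) := by
  rcases h0.lt_or_eq with h | h
  · exact h
  · exfalso
    have h1 := ht (f i)
    rw [← h, sub_zero, mul_zero] at h1
    have h2 : empFreq f (f i) = 0 := abs_eq_zero.mp (le_antisymm h1 (abs_nonneg _))
    have hn : (0:ℝ) < n := by exact_mod_cast i.pos
    have hc : 0 < ((Finset.univ.filter fun j => f j = f i).card : ℝ) := by
      exact_mod_cast Finset.card_pos.mpr ⟨i, by simp⟩
    rw [empFreq] at h2
    have h3 := div_pos hc hn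
    rw [h2] at h3
    exact lt_irrefl _ h3

end JTAux

/-- **Joint typicality lemma**: for every joint pmf `p` on `𝒳 × 𝒴 × 𝒵` there is a
function `δ` with `δ(ε) → 0` as `ε → 0⁺` such that for all `n`, all `ε > 0` and all
`(xⁿ,yⁿ)` jointly `ε`-typical for the `(X,Y)`-marginal of `p`: if `Z̃ⁿ` has independent
components with `Z̃ᵢ ∼ P_{Z|X}(·|xᵢ)`, then
`Pr{(xⁿ,yⁿ,Z̃ⁿ) ∈ T_ε⁽ⁿ⁾} ≤ 2^{−n(I(Y;Z|X) − δ(ε))}`. -/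
theorem joint_typicality_lemma
    {𝒳 𝒴 𝒵 : Type} [Fintype 𝒳] [Fintype 𝒴] [Fintype 𝒵]
    (p : 𝒳 × 𝒴 × 𝒵 → ℝ) (hp : IsPMF p) :
    ∃ δ : ℝ → ℝ, Filter.Tendsto δ (nhdsWithin 0 (Set.Ioi 0)) (nhds 0) ∧
      ∀ (n : ℕ) (ε : ℝ), 0 < ε → ∀ (x : Fin n → 𝒳) (y : Fin n → 𝒴),
        StronglyTypical (fun ab : 𝒳 × 𝒴 => ∑ c, p (ab.1, ab.2, c)) ε
            (fun i => (x i, y i)) →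
        (∑ z : Fin n → 𝒵,
            (∏ i, (∑ b, p (x i, b, z i)) / (∑ bc : 𝒴 × 𝒵, p (x i, bc.1, bc.2))) *
              (if StronglyTypical p ε (fun i => (x i, y i, z i)) then (1 : ℝ) else 0))
          ≤ 2 ^ (-(n : ℝ) * (cmi p (fun q => q.2.1) (fun q => q.2.2) (fun q => q.1)
              - δ ε)) := by
  classical
  obtain ⟨hp0, hp1⟩ := hp
  set C : ℝ := ∑ a, p a * |gfun p a| with hC
  refine ⟨fun ε => C * ε, ?_, ?_⟩
  · have h : Filter.Tendsto (fun ε : ℝ => C * ε) (nhds 0) (nhds 0) := by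
      simpa using (continuous_mul_left C).tendsto (0:ℝ)
    exact h.mono_left nhdsWithin_le_nhds
  · intro n ε hε x y hxy
    show _ ≤ (2:ℝ) ^ (-(n : ℝ) *
      (cmi p (fun q => q.2.1) (fun q => q.2.2) (fun q => q.1) - C * ε))
    have hpXY0 : ∀ u v, 0 ≤ ∑ c, p (u, v, c) :=
      fun u v => Finset.sum_nonneg fun _ _ => hp0 _
    have hXYpos : ∀ i : Fin n, 0 < ∑ c, p (x i, y i, c) := by
      intro i
      exact pos_of_typical hxy i (hpXY0 (x i) (y i))
    have hXpos : ∀ i : Fin n, 0 < ∑ bc : 𝒴 × 𝒵, p (x i, bc.1, bc.2) := by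
      intro i
      have hle : (∑ c, p (x i, y i, c)) ≤ ∑ bc : 𝒴 × 𝒵, p (x i, bc.1, bc.2) := by
        rw [Fintype.sum_prod_type]
        exact Finset.single_le_sum (f := fun v => ∑ c, p (x i, v, c))
          (fun v _ => hpXY0 _ _) (Finset.mem_univ (y i))
      exact lt_of_lt_of_le (hXYpos i) hle
    have key : ∀ z : Fin n → 𝒵, StronglyTypical p ε (fun i => (x i, y i, z i)) →
        (∏ i, (∑ b, p (x i, b, z i)) / (∑ bc : 𝒴 × 𝒵, p (x i, bc.1, bc.2)))
          ≤ 2 ^ (-(n : ℝ) *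
              (cmi p (fun q => q.2.1) (fun q => q.2.2) (fun q => q.1) - C * ε))
            * ∏ i, p (x i, y i, z i) / (∑ c, p (x i, y i, c)) := by
      intro z hz
      have htrip : ∀ i, 0 < p (x i, y i, z i) := fun i =>
        pos_of_typical hz i (hp0 _)
      have hZXpos : ∀ i, 0 < ∑ b, p (x i, b, z i) := by
        intro i
        have hle : p (x i, y i, z i) ≤ ∑ b, p (x i, b, z i) :=
          Finset.single_le_sum (f := fun b => p (x i, b, z i))
            (fun b _ => hp0 _) (Finset.mem_univ (y i))
        exact lt_of_lt_of_le (htrip i) hle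
      have hsum : ∑ i, gfun p (x i, y i, z i)
          ≤ -(n : ℝ) * (cmi p (fun q => q.2.1) (fun q => q.2.2) (fun q => q.1) - C * ε) := by
        refine le_trans (sum_g_le (fun i => (x i, y i, z i)) hz (gfun p)) (le_of_eq ?_)
        rw [sum_gfun, ← hC]
        ring
      have hprod : (∏ i, (∑ b, p (x i, b, z i)) * (∑ c, p (x i, y i, c)) /
            ((∑ bc : 𝒴 × 𝒵, p (x i, bc.1, bc.2)) * p (x i, y i, z i)))
          ≤ (2:ℝ) ^ (-(n : ℝ) *
              (cmi p (fun q => q.2.1) (fun q => q.2.2) (fun q => q.1) - C * ε)) := by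
        have e1 : ∀ i : Fin n,
            (∑ b, p (x i, b, z i)) * (∑ c, p (x i, y i, c)) /
              ((∑ bc : 𝒴 × 𝒵, p (x i, bc.1, bc.2)) * p (x i, y i, z i))
            = (2:ℝ) ^ (gfun p (x i, y i, z i)) := by
          intro i
          have hlog : Real.logb 2 ((∑ b, p (x i, b, z i)) * (∑ c, p (x i, y i, c)) /
              ((∑ bc : 𝒴 × 𝒵, p (x i, bc.1, bc.2)) * p (x i, y i, z i)))
              = gfun p (x i, y i, z i) := by
            rw [Real.logb_div (mul_pos (hZXpos i) (hXYpos i)).ne'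
                (mul_pos (hXpos i) (htrip i)).ne',
              Real.logb_mul (hZXpos i).ne' (hXYpos i).ne',
              Real.logb_mul (hXpos i).ne' (htrip i).ne', gfun]
            ring
          rw [← hlog, Real.rpow_logb two_pos (by norm_num)
            (div_pos (mul_pos (hZXpos i) (hXYpos i)) (mul_pos (hXpos i) (htrip i)))]
        calc (∏ i, (∑ b, p (x i, b, z i)) * (∑ c, p (x i, y i, c)) /
              ((∑ bc : 𝒴 × 𝒵, p (x i, bc.1, bc.2)) * p (x i, y i, z i)))
            = ∏ i, (2:ℝ) ^ (gfun p (x i, y i, z i)) :=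
              Finset.prod_congr rfl (fun i _ => e1 i)
          _ = (2:ℝ) ^ (∑ i, gfun p (x i, y i, z i)) := (two_rpow_sum _ _).symm
          _ ≤ _ := Real.rpow_le_rpow_of_exponent_le one_le_two hsum
      have hfactor : (∏ i, (∑ b, p (x i, b, z i)) / (∑ bc : 𝒴 × 𝒵, p (x i, bc.1, bc.2)))
          = (∏ i, (∑ b, p (x i, b, z i)) * (∑ c, p (x i, y i, c)) /
              ((∑ bc : 𝒴 × 𝒵, p (x i, bc.1, bc.2)) * p (x i, y i, z i)))
            * ∏ i, p (x i, y i, z i) / (∑ c, p (x i, y i, c)) := by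
        rw [← Finset.prod_mul_distrib]
        refine Finset.prod_congr rfl fun i _ => ?_
        have h1 := (hXpos i).ne'
        have h2 := (htrip i).ne'
        have h3 := (hXYpos i).ne'
        field_simp
      rw [hfactor]
      exact mul_le_mul_of_nonneg_right hprod
        (Finset.prod_nonneg fun i _ => div_nonneg (hp0 _) (hpXY0 _ _))
    calc (∑ z : Fin n → 𝒵,
            (∏ i, (∑ b, p (x i, b, z i)) / (∑ bc : 𝒴 × 𝒵, p (x i, bc.1, bc.2))) *
              (if StronglyTypical p ε (fun i => (x i, y i, z i)) then (1 : ℝ) else 0))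
        ≤ ∑ z : Fin n → 𝒵, (2:ℝ) ^ (-(n : ℝ) *
              (cmi p (fun q => q.2.1) (fun q => q.2.2) (fun q => q.1) - C * ε))
            * ∏ i, p (x i, y i, z i) / (∑ c, p (x i, y i, c)) := by
          refine Finset.sum_le_sum fun z _ => ?_
          by_cases hz : StronglyTypical p ε (fun i => (x i, y i, z i))
          · rw [if_pos hz, mul_one]
            exact key z hz
          · rw [if_neg hz, mul_zero]
            exact mul_nonneg (Real.rpow_nonneg (by norm_num) _)
              (Finset.prod_nonneg fun i _ => div_nonneg (hp0 _) (hpXY0 _ _))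
      _ = (2:ℝ) ^ (-(n : ℝ) *
              (cmi p (fun q => q.2.1) (fun q => q.2.2) (fun q => q.1) - C * ε))
            * ∑ z : Fin n → 𝒵, ∏ i, p (x i, y i, z i) / (∑ c, p (x i, y i, c)) := by
          rw [← Finset.mul_sum]
      _ = (2:ℝ) ^ (-(n : ℝ) *
              (cmi p (fun q => q.2.1) (fun q => q.2.2) (fun q => q.1) - C * ε))
            * ∏ i, ∑ w, p (x i, y i, w) / (∑ c, p (x i, y i, c)) := by
          rw [Fintype.prod_sum]
      _ = (2:ℝ) ^ (-(n : ℝ) *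
              (cmi p (fun q => q.2.1) (fun q => q.2.2) (fun q => q.1) - C * ε)) := by
          have h1 : ∀ i : Fin n, (∑ w, p (x i, y i, w) / (∑ c, p (x i, y i, c))) = 1 := by
            intro i
            rw [← Finset.sum_div, div_self (hXYpos i).ne']
          rw [Finset.prod_congr rfl (fun i _ => h1 i), Finset.prod_const_one, mul_one]


end Paper
end

section
/- Let M1, M2 be independent finite-valued random variables that are jointly independent of the finite-valued sequence S^n = (S_1,…,S_n). Let M12 = f12(M1,S^n), X1^n = f1(M1,S^n), and X2^n = f2(M2,M12) for deterministic functions f12, f1, f2, and let Y^n = (Y_1,…,Y_n) be such that for each i, Y_i is conditionally independent of (M1,M2,M12,S^n,X1^n,X2^n,Y^{i−1}) given (S_i,X_{1,i},X_{2,i}). Then, with U_i = (M12,S^{i−1}), I(M1;Y^n|S^n,M2,M12) ≤ Σ_{i=1}^n I(X_{1,i};Y_i|S_i,X_{2,i},U_i). -/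
open scoped BigOperators Classical
open Finset

namespace Paper

variable {Ω : Type} [Fintype Ω]

section Aux
variable {A B C D A' B' C' : Type} (μ : Ω → ℝ)

lemma pr_nonneg (h0 : ∀ ω, 0 ≤ μ ω) (X : Ω → A) (a : A) : 0 ≤ pr μ X a := by
  apply Finset.sum_nonneg; intro ω _; split <;> simp [h0 ω]

lemma sum_pr [Fintype A] (hμ : IsPMF μ) (X : Ω → A) : ∑ a, pr μ X a = 1 := by
  unfold pr; rw [Finset.sum_comm]
  simp only [Finset.sum_ite_eq, Finset.mem_univ, if_true]
  exact hμ.2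

lemma pr_le (h0 : ∀ ω, 0 ≤ μ ω) {X : Ω → A} {Z : Ω → C} {a : A} {c : C}
    (h : ∀ ω, X ω = a → Z ω = c) : pr μ X a ≤ pr μ Z c := by
  apply Finset.sum_le_sum; intro ω _
  by_cases hx : X ω = a
  · simp [hx, h ω hx]
  · simp only [hx, if_false]; split <;> simp [h0 ω]

lemma ent_congr {A B : Type} [Fintype A] [Fintype B] {X : Ω → A} {Y : Ω → B}
    {e : A → B} (he : Function.Injective e) (h : ∀ ω, Y ω = e (X ω)) :
    ent μ Y = ent μ X := by
  have h1 : ∀ a, pr μ Y (e a) = pr μ X a := by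
    intro a; unfold pr
    apply Finset.sum_congr rfl; intro ω _
    simp only [h ω, he.eq_iff]
  have h2 : ∀ b, b ∉ Finset.image e Finset.univ → pr μ Y b = 0 := by
    intro b hb
    have : ∀ ω, Y ω ≠ b := by
      intro ω hω
      exact hb (Finset.mem_image.2 ⟨X ω, Finset.mem_univ _, by rw [← h ω, hω]⟩)
    unfold pr; apply Finset.sum_eq_zero; intro ω _; simp [this ω]
  unfold ent
  congr 1
  rw [← Finset.sum_subset (Finset.subset_univ (Finset.image e Finset.univ))]
  · rw [Finset.sum_image (fun a _ b _ hab => he hab)]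
    exact Finset.sum_congr rfl fun a _ => by rw [h1 a]
  · intro b _ hb; rw [h2 b hb]; simp


lemma pr_marg₁ [Fintype B] (X : Ω → A) (Y : Ω → B) (Z : Ω → C) (a : A) (c : C) :
    ∑ b, pr μ (fun ω => (X ω, Y ω, Z ω)) (a, b, c) = pr μ (fun ω => (X ω, Z ω)) (a, c) := by
  unfold pr; rw [Finset.sum_comm]
  apply Finset.sum_congr rfl; intro ω _
  by_cases h : X ω = a ∧ Z ω = c
  · simp [Prod.ext_iff, h.1, h.2, Finset.sum_ite_eq]
  · rw [Finset.sum_eq_zero, if_neg (fun hc => h (by simpa [Prod.ext_iff] using hc))]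
    intro b _; rw [if_neg]; simp [Prod.ext_iff]; tauto

lemma pr_marg₂ [Fintype A] (X : Ω → A) (Y : Ω → B) (Z : Ω → C) (b : B) (c : C) :
    ∑ a, pr μ (fun ω => (X ω, Y ω, Z ω)) (a, b, c) = pr μ (fun ω => (Y ω, Z ω)) (b, c) := by
  unfold pr; rw [Finset.sum_comm]
  apply Finset.sum_congr rfl; intro ω _
  by_cases h : Y ω = b ∧ Z ω = c
  · simp [Prod.ext_iff, h.1, h.2, Finset.sum_ite_eq]
  · rw [Finset.sum_eq_zero, if_neg (fun hc => h (by simpa [Prod.ext_iff] using hc))]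
    intro a _; rw [if_neg]; simp [Prod.ext_iff]; tauto

lemma pr_marg_pair [Fintype B] (Y : Ω → B) (Z : Ω → C) (c : C) :
    ∑ b, pr μ (fun ω => (Y ω, Z ω)) (b, c) = pr μ Z c := by
  unfold pr; rw [Finset.sum_comm]
  apply Finset.sum_congr rfl; intro ω _
  by_cases h : Z ω = c
  · simp [Prod.ext_iff, h, Finset.sum_ite_eq]
  · rw [Finset.sum_eq_zero, if_neg h]
    intro b _; rw [if_neg]; simp [Prod.ext_iff]; tauto

lemma pr_marg₃ [Fintype A] [Fintype B] (X : Ω → A) (Y : Ω → B) (Z : Ω → C) (c : C) :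
    ∑ a, ∑ b, pr μ (fun ω => (X ω, Y ω, Z ω)) (a, b, c) = pr μ Z c := by
  rw [Finset.sum_comm]
  rw [Finset.sum_congr rfl (fun b _ => pr_marg₂ μ X Y Z b c)]
  exact pr_marg_pair μ Y Z c

lemma cmi_comm [Fintype A] [Fintype B] [Fintype C]
    (X : Ω → A) (Y : Ω → B) (Z : Ω → C) : cmi μ X Y Z = cmi μ Y X Z := by
  unfold cmi
  have : ent μ (fun ω => (X ω, Y ω, Z ω)) = ent μ (fun ω => (Y ω, X ω, Z ω)) := by
    apply ent_congr μ (e := fun p : B × A × C => (p.2.1, p.1, p.2.2))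
    · intro p q h; simp only [Prod.ext_iff] at *; tauto
    · intro ω; rfl
  rw [this]; ring

lemma cmi_chain [Fintype A] [Fintype B] [Fintype C] [Fintype D]
    (X : Ω → A) (W : Ω → B) (Y : Ω → D) (T : Ω → C) :
    cmi μ (fun ω => (X ω, W ω)) Y T
      = cmi μ W Y T + cmi μ X Y (fun ω => (W ω, T ω)) := by
  unfold cmi
  have e1 : ent μ (fun ω => (X ω, W ω, T ω)) = ent μ (fun ω => ((X ω, W ω), T ω)) := by
    apply ent_congr μ (e := fun p : (A × B) × C => (p.1.1, p.1.2, p.2))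
    · intro p q h; simp only [Prod.ext_iff] at *; tauto
    · intro ω; rfl
  have e2 : ent μ (fun ω => (W ω, Y ω, T ω)) = ent μ (fun ω => (Y ω, W ω, T ω)) := by
    apply ent_congr μ (e := fun p : D × B × C => (p.2.1, p.1, p.2.2))
    · intro p q h; simp only [Prod.ext_iff] at *; tauto
    · intro ω; rfl
  have e3 : ent μ (fun ω => (X ω, Y ω, W ω, T ω)) = ent μ (fun ω => ((X ω, W ω), Y ω, T ω)) := by
    apply ent_congr μ (e := fun p : (A × B) × D × C => (p.1.1, p.2.1, p.1.2, p.2.2))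
    · intro p q h; simp only [Prod.ext_iff] at *; tauto
    · intro ω; rfl
  rw [← e1, ← e3, ← e2]; ring

lemma cmi_congr [Fintype A] [Fintype B] [Fintype C] [Fintype A'] [Fintype B'] [Fintype C']
    {X : Ω → A} {Y : Ω → B} {Z : Ω → C} {X' : Ω → A'} {Y' : Ω → B'} {Z' : Ω → C'}
    {e₁ : A → A'} {e₂ : B → B'} {e₃ : C → C'}
    (h₁ : Function.Injective e₁) (h₂ : Function.Injective e₂) (h₃ : Function.Injective e₃)
    (hX : ∀ ω, X' ω = e₁ (X ω)) (hY : ∀ ω, Y' ω = e₂ (Y ω)) (hZ : ∀ ω, Z' ω = e₃ (Z ω)) :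
    cmi μ X' Y' Z' = cmi μ X Y Z := by
  unfold cmi
  have q1 : ent μ (fun ω => (X' ω, Z' ω)) = ent μ (fun ω => (X ω, Z ω)) := by
    apply ent_congr μ (e := Prod.map e₁ e₃) (h₁.prodMap h₃)
    intro ω; simp [hX, hZ]
  have q2 : ent μ (fun ω => (Y' ω, Z' ω)) = ent μ (fun ω => (Y ω, Z ω)) := by
    apply ent_congr μ (e := Prod.map e₂ e₃) (h₂.prodMap h₃)
    intro ω; simp [hY, hZ]
  have q3 : ent μ (fun ω => (X' ω, Y' ω, Z' ω)) = ent μ (fun ω => (X ω, Y ω, Z ω)) := by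
    apply ent_congr μ (e := Prod.map e₁ (Prod.map e₂ e₃)) (h₁.prodMap (h₂.prodMap h₃))
    intro ω; simp [hX, hY, hZ]
  have q4 : ent μ Z' = ent μ Z := ent_congr μ h₃ hZ
  rw [q1, q2, q3, q4]


lemma cmi_eq [Fintype A] [Fintype B] [Fintype C] (X : Ω → A) (Y : Ω → B) (Z : Ω → C) :
    cmi μ X Y Z = ∑ x : A × B × C,
      pr μ (fun ω => (X ω, Y ω, Z ω)) x *
      (Real.logb 2 (pr μ (fun ω => (X ω, Y ω, Z ω)) x)
        + Real.logb 2 (pr μ Z x.2.2)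
        - Real.logb 2 (pr μ (fun ω => (X ω, Z ω)) (x.1, x.2.2))
        - Real.logb 2 (pr μ (fun ω => (Y ω, Z ω)) (x.2.1, x.2.2))) := by
  simp only [Fintype.sum_prod_type]
  have h1 : ∑ a, ∑ b, ∑ c, pr μ (fun ω => (X ω, Y ω, Z ω)) (a, b, c)
        * Real.logb 2 (pr μ (fun ω => (X ω, Z ω)) (a, c))
      = ∑ a, ∑ c, pr μ (fun ω => (X ω, Z ω)) (a, c)
        * Real.logb 2 (pr μ (fun ω => (X ω, Z ω)) (a, c)) := by
    apply Finset.sum_congr rfl; intro a _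
    rw [Finset.sum_comm]
    apply Finset.sum_congr rfl; intro c _
    rw [← Finset.sum_mul, pr_marg₁]
  have h2 : ∑ a, ∑ b, ∑ c, pr μ (fun ω => (X ω, Y ω, Z ω)) (a, b, c)
        * Real.logb 2 (pr μ (fun ω => (Y ω, Z ω)) (b, c))
      = ∑ b, ∑ c, pr μ (fun ω => (Y ω, Z ω)) (b, c)
        * Real.logb 2 (pr μ (fun ω => (Y ω, Z ω)) (b, c)) := by
    rw [Finset.sum_comm]
    apply Finset.sum_congr rfl; intro b _
    rw [Finset.sum_comm]
    apply Finset.sum_congr rfl; intro c _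
    rw [← Finset.sum_mul, pr_marg₂]
  have h3 : ∑ a, ∑ b, ∑ c, pr μ (fun ω => (X ω, Y ω, Z ω)) (a, b, c)
        * Real.logb 2 (pr μ Z c)
      = ∑ c, pr μ Z c * Real.logb 2 (pr μ Z c) := by
    have hc : ∀ a : A, (∑ b, ∑ c, pr μ (fun ω => (X ω, Y ω, Z ω)) (a, b, c)
          * Real.logb 2 (pr μ Z c))
        = ∑ c, ∑ b, pr μ (fun ω => (X ω, Y ω, Z ω)) (a, b, c) * Real.logb 2 (pr μ Z c) :=
      fun a => Finset.sum_comm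
    simp only [hc]
    rw [Finset.sum_comm]
    apply Finset.sum_congr rfl; intro c _
    have : ∀ a : A, (∑ b, pr μ (fun ω => (X ω, Y ω, Z ω)) (a, b, c) * Real.logb 2 (pr μ Z c))
        = (∑ b, pr μ (fun ω => (X ω, Y ω, Z ω)) (a, b, c)) * Real.logb 2 (pr μ Z c) :=
      fun a => (Finset.sum_mul _ _ _).symm
    simp only [this]
    rw [← Finset.sum_mul, pr_marg₃]
  have expand : ∀ a, ∀ b : B, ∀ c : C,
      pr μ (fun ω => (X ω, Y ω, Z ω)) (a, b, c) *
      (Real.logb 2 (pr μ (fun ω => (X ω, Y ω, Z ω)) (a, b, c))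
        + Real.logb 2 (pr μ Z c)
        - Real.logb 2 (pr μ (fun ω => (X ω, Z ω)) (a, c))
        - Real.logb 2 (pr μ (fun ω => (Y ω, Z ω)) (b, c)))
      = pr μ (fun ω => (X ω, Y ω, Z ω)) (a, b, c) * Real.logb 2 (pr μ (fun ω => (X ω, Y ω, Z ω)) (a, b, c))
        + pr μ (fun ω => (X ω, Y ω, Z ω)) (a, b, c) * Real.logb 2 (pr μ Z c)
        - pr μ (fun ω => (X ω, Y ω, Z ω)) (a, b, c) * Real.logb 2 (pr μ (fun ω => (X ω, Z ω)) (a, c))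
        - pr μ (fun ω => (X ω, Y ω, Z ω)) (a, b, c) * Real.logb 2 (pr μ (fun ω => (Y ω, Z ω)) (b, c)) :=
    fun a b c => by ring
  simp only [expand, Finset.sum_add_distrib, Finset.sum_sub_distrib]
  rw [h1, h2, h3]
  unfold cmi ent
  simp only [Fintype.sum_prod_type]
  ring

lemma cmi_eq_filter [Fintype A] [Fintype B] [Fintype C] (X : Ω → A) (Y : Ω → B) (Z : Ω → C) :
    cmi μ X Y Z = ∑ x ∈ Finset.univ.filter
        (fun x : A × B × C => pr μ (fun ω => (X ω, Y ω, Z ω)) x ≠ 0),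
      pr μ (fun ω => (X ω, Y ω, Z ω)) x *
      (Real.logb 2 (pr μ (fun ω => (X ω, Y ω, Z ω)) x)
        + Real.logb 2 (pr μ Z x.2.2)
        - Real.logb 2 (pr μ (fun ω => (X ω, Z ω)) (x.1, x.2.2))
        - Real.logb 2 (pr μ (fun ω => (Y ω, Z ω)) (x.2.1, x.2.2))) := by
  rw [cmi_eq]
  rw [Finset.sum_filter_of_ne]
  intro x _ hx hx0
  exact hx (by rw [hx0, zero_mul])

lemma cmi_nonneg [Fintype A] [Fintype B] [Fintype C] (hμ : IsPMF μ)
    (X : Ω → A) (Y : Ω → B) (Z : Ω → C) : 0 ≤ cmi μ X Y Z := by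
  classical
  set T : Ω → A × B × C := fun ω => (X ω, Y ω, Z ω) with hT
  set p : A × B × C → ℝ := fun x => pr μ T x with hp
  set supp : Finset (A × B × C) := Finset.univ.filter (fun x => p x ≠ 0) with hsupp
  set pAC : A × B × C → ℝ := fun x => pr μ (fun ω => (X ω, Z ω)) (x.1, x.2.2) with hpAC
  set pBC : A × B × C → ℝ := fun x => pr μ (fun ω => (Y ω, Z ω)) (x.2.1, x.2.2) with hpBC
  set pC : A × B × C → ℝ := fun x => pr μ Z x.2.2 with hpC
  set q : A × B × C → ℝ := fun x => pAC x * pBC x / pC x with hq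
  have h0 := hμ.1
  -- positivity on the support
  have hple : ∀ x, p x ≤ pAC x ∧ p x ≤ pBC x ∧ p x ≤ pC x := by
    intro x
    refine ⟨pr_le μ h0 ?_, pr_le μ h0 ?_, pr_le μ h0 ?_⟩ <;>
      (intro ω hω; rw [← hω])
  have hpos : ∀ x ∈ supp, 0 < p x := by
    intro x hx
    have := (Finset.mem_filter.1 hx).2
    exact lt_of_le_of_ne (pr_nonneg μ h0 T x) (Ne.symm this)
  have hqpos : ∀ x ∈ supp, 0 < q x := by
    intro x hx
    have h1 := lt_of_lt_of_le (hpos x hx) (hple x).1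
    have h2 := lt_of_lt_of_le (hpos x hx) (hple x).2.1
    have h3 := lt_of_lt_of_le (hpos x hx) (hple x).2.2
    exact div_pos (mul_pos h1 h2) h3
  have hlog2 : (0:ℝ) < Real.log 2 := Real.log_pos (by norm_num)
  -- rewrite cmi as a sum over the support
  rw [cmi_eq_filter]
  -- each term equals -(p x * logb 2 (q x / p x))
  have hterm : ∀ x ∈ supp,
      p x * (Real.logb 2 (p x) + Real.logb 2 (pC x)
        - Real.logb 2 (pAC x) - Real.logb 2 (pBC x))
      = -(p x * Real.logb 2 (q x / p x)) := by
    intro x hx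
    have hpx := (hpos x hx).ne'
    have h1 := (lt_of_lt_of_le (hpos x hx) (hple x).1).ne'
    have h2 := (lt_of_lt_of_le (hpos x hx) (hple x).2.1).ne'
    have h3 := (lt_of_lt_of_le (hpos x hx) (hple x).2.2).ne'
    have hqx := (hqpos x hx).ne'
    rw [Real.logb_div hqx hpx, hq]
    rw [Real.logb_div (mul_ne_zero h1 h2) h3, Real.logb_mul h1 h2]
    ring
  have hsum1 : ∑ x ∈ supp, p x = 1 := by
    rw [Finset.sum_filter_of_ne (fun x _ h => h)]
    exact sum_pr μ hμ T
  have hsumq : ∑ x ∈ supp, q x ≤ 1 := by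
    have step1 : ∑ x ∈ supp, q x
        ≤ ∑ x : A × B × C, (if pC x = 0 then 0 else q x) := by
      have e1 : ∑ x ∈ supp, q x = ∑ x ∈ supp, (if pC x = 0 then 0 else q x) := by
        apply Finset.sum_congr rfl; intro x hx
        rw [if_neg (lt_of_lt_of_le (hpos x hx) (hple x).2.2).ne']
      rw [e1]
      apply Finset.sum_le_sum_of_subset_of_nonneg (Finset.subset_univ _)
      intro x _ _
      split
      · exact le_refl 0
      · exact div_nonneg (mul_nonneg (pr_nonneg μ h0 _ _) (pr_nonneg μ h0 _ _))
          (pr_nonneg μ h0 _ _)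
    refine le_trans step1 ?_
    have step2 : ∑ x : A × B × C, (if pC x = 0 then 0 else q x) = ∑ c, pr μ Z c := by
      simp only [Fintype.sum_prod_type, hq, hpC, hpAC, hpBC]
      have hcomm : ∀ f : A → B → C → ℝ, (∑ a, ∑ b, ∑ c, f a b c) = ∑ c, ∑ a, ∑ b, f a b c := by
        intro f
        have : ∀ a, (∑ b, ∑ c, f a b c) = ∑ c, ∑ b, f a b c := fun a => Finset.sum_comm
        simp only [this]
        exact Finset.sum_comm
      rw [hcomm]
      apply Finset.sum_congr rfl; intro c _
      by_cases hc : pr μ Z c = 0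
      · simp only [hc, if_pos rfl]
        simp [hc]
      · simp only [hc, if_neg hc, if_false]
        have hb : ∀ a, (∑ b, pr μ (fun ω => (X ω, Z ω)) (a, c)
              * pr μ (fun ω => (Y ω, Z ω)) (b, c) / pr μ Z c)
            = pr μ (fun ω => (X ω, Z ω)) (a, c) := by
          intro a
          rw [← Finset.sum_div]
          rw [← Finset.mul_sum]
          rw [pr_marg_pair μ Y Z c]
          field_simp
        simp only [hb]
        exact pr_marg_pair μ X Z c
    rw [step2, sum_pr μ hμ Z]
  -- the main estimate
  have key : ∑ x ∈ supp, p x * Real.logb 2 (q x / p x) ≤ 0 := by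
    have hb : ∀ x ∈ supp, p x * Real.logb 2 (q x / p x) ≤ (q x - p x) / Real.log 2 := by
      intro x hx
      have hpx := hpos x hx
      have hqp : 0 < q x / p x := div_pos (hqpos x hx) hpx
      have hlog : Real.log (q x / p x) ≤ q x / p x - 1 := Real.log_le_sub_one_of_pos hqp
      have : p x * Real.logb 2 (q x / p x) ≤ p x * ((q x / p x - 1) / Real.log 2) := by
        apply mul_le_mul_of_nonneg_left _ hpx.le
        rw [Real.logb, div_le_div_iff_of_pos_right hlog2]
        exact hlog
      refine le_trans this (le_of_eq ?_)
      field_simp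
    calc ∑ x ∈ supp, p x * Real.logb 2 (q x / p x)
        ≤ ∑ x ∈ supp, (q x - p x) / Real.log 2 := Finset.sum_le_sum hb
      _ = (∑ x ∈ supp, q x - ∑ x ∈ supp, p x) / Real.log 2 := by
          rw [← Finset.sum_div, Finset.sum_sub_distrib]
      _ ≤ 0 := by
          rw [hsum1]
          apply div_nonpos_of_nonpos_of_nonneg _ hlog2.le
          linarith
  calc (0:ℝ) ≤ -∑ x ∈ supp, p x * Real.logb 2 (q x / p x) := by linarith
    _ = ∑ x ∈ supp, -(p x * Real.logb 2 (q x / p x)) := by rw [Finset.sum_neg_distrib]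
    _ = ∑ x ∈ supp, p x * (Real.logb 2 (p x) + Real.logb 2 (pC x)
        - Real.logb 2 (pAC x) - Real.logb 2 (pBC x)) :=
        (Finset.sum_congr rfl hterm).symm
    _ = _ := rfl

lemma cmi_eq_zero_of_condIndep [Fintype A] [Fintype B] [Fintype C] (hμ : IsPMF μ)
    {X : Ω → A} {Y : Ω → B} {Z : Ω → C} (h : CondIndep μ X Y Z) :
    cmi μ X Y Z = 0 := by
  rw [cmi_eq_filter]
  apply Finset.sum_eq_zero
  intro x hx
  have h0 := hμ.1
  have hp : pr μ (fun ω => (X ω, Y ω, Z ω)) x ≠ 0 := (Finset.mem_filter.1 hx).2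
  have hppos : 0 < pr μ (fun ω => (X ω, Y ω, Z ω)) x :=
    lt_of_le_of_ne (pr_nonneg μ h0 _ _) (Ne.symm hp)
  have hAC : 0 < pr μ (fun ω => (X ω, Z ω)) (x.1, x.2.2) :=
    lt_of_lt_of_le hppos (pr_le μ h0 (fun ω hω => by rw [← hω]))
  have hBC : 0 < pr μ (fun ω => (Y ω, Z ω)) (x.2.1, x.2.2) :=
    lt_of_lt_of_le hppos (pr_le μ h0 (fun ω hω => by rw [← hω]))
  have hC : 0 < pr μ Z x.2.2 :=
    lt_of_lt_of_le hppos (pr_le μ h0 (fun ω hω => by rw [← hω]))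
  have hci := h x.1 x.2.1 x.2.2 hC.ne'
  have hxx : (x.1, x.2.1, x.2.2) = x := rfl
  rw [hxx] at hci
  have : Real.logb 2 (pr μ (fun ω => (X ω, Y ω, Z ω)) x) + Real.logb 2 (pr μ Z x.2.2)
      = Real.logb 2 (pr μ (fun ω => (X ω, Z ω)) (x.1, x.2.2))
        + Real.logb 2 (pr μ (fun ω => (Y ω, Z ω)) (x.2.1, x.2.2)) := by
    rw [← Real.logb_mul hp hC.ne', ← Real.logb_mul hAC.ne' hBC.ne', hci]
  rw [show Real.logb 2 (pr μ (fun ω => (X ω, Y ω, Z ω)) x) + Real.logb 2 (pr μ Z x.2.2)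
        - Real.logb 2 (pr μ (fun ω => (X ω, Z ω)) (x.1, x.2.2))
        - Real.logb 2 (pr μ (fun ω => (Y ω, Z ω)) (x.2.1, x.2.2)) = 0 by rw [this]; ring]
  ring


lemma cmi_telescope {n : ℕ} {A C 𝒴 : Type} [Fintype A] [Fintype C] [Fintype 𝒴]
    (M : Ω → A) (Zc : Ω → C) (Y : Fin n → Ω → 𝒴) :
    cmi μ M (fun ω => fun i => Y i ω) Zc
      = ∑ i : Fin n, cmi μ M (Y i)
          (fun ω => (Zc ω, fun j : {j : Fin n // (j : ℕ) < (i : ℕ)} => Y j.1 ω)) := by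
  classical
  set F : ℕ → ℝ := fun k =>
    ent μ (fun ω => ((M ω, Zc ω), fun j : {j : Fin n // (j : ℕ) < k} => Y j.1 ω)) with hF
  set G : ℕ → ℝ := fun k =>
    ent μ (fun ω => (Zc ω, fun j : {j : Fin n // (j : ℕ) < k} => Y j.1 ω)) with hG
  have step : ∀ i : Fin n,
      cmi μ M (Y i) (fun ω => (Zc ω, fun j : {j : Fin n // (j : ℕ) < (i : ℕ)} => Y j.1 ω))
        = (F ↑i - F (↑i + 1)) + (G (↑i + 1) - G ↑i) := by
    intro i
    unfold cmi
    have ea : ent μ (fun ω => (M ω, Zc ω, fun j : {j : Fin n // (j : ℕ) < (i : ℕ)} => Y j.1 ω))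
        = F ↑i := by
      apply ent_congr μ
        (e := fun p : (A × C) × ({j : Fin n // (j : ℕ) < (i : ℕ)} → 𝒴) =>
          (p.1.1, p.1.2, p.2))
      · intro p q h; simp only [Prod.ext_iff] at *; tauto
      · intro ω; rfl
    have eb : ent μ (fun ω => (Y i ω, Zc ω, fun j : {j : Fin n // (j : ℕ) < (i : ℕ)} => Y j.1 ω))
        = G (↑i + 1) := by
      apply ent_congr μ
        (e := fun p : C × ({j : Fin n // (j : ℕ) < (i : ℕ) + 1} → 𝒴) =>
          (p.2 ⟨i, Nat.lt_succ_self _⟩, p.1,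
            fun j : {j : Fin n // (j : ℕ) < (i : ℕ)} => p.2 ⟨j.1, Nat.lt_succ_of_lt j.2⟩))
      · rintro ⟨z, g⟩ ⟨z', g'⟩ h
        simp only [Prod.ext_iff] at h
        obtain ⟨h1, h2, h3⟩ := h
        refine Prod.ext h2 ?_
        funext j
        rcases Nat.lt_succ_iff_lt_or_eq.1 j.2 with hj | hj
        · exact congrFun h3 ⟨j.1, hj⟩
        · have hji : j = ⟨i, Nat.lt_succ_self _⟩ := Subtype.ext (Fin.ext hj)
          rw [hji]; exact h1
      · intro ω; rfl
    have ec : ent μ (fun ω => (M ω, Y i ω, Zc ω,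
          fun j : {j : Fin n // (j : ℕ) < (i : ℕ)} => Y j.1 ω))
        = F (↑i + 1) := by
      apply ent_congr μ
        (e := fun p : (A × C) × ({j : Fin n // (j : ℕ) < (i : ℕ) + 1} → 𝒴) =>
          (p.1.1, p.2 ⟨i, Nat.lt_succ_self _⟩, p.1.2,
            fun j : {j : Fin n // (j : ℕ) < (i : ℕ)} => p.2 ⟨j.1, Nat.lt_succ_of_lt j.2⟩))
      · rintro ⟨⟨m, z⟩, g⟩ ⟨⟨m', z'⟩, g'⟩ h
        simp only [Prod.ext_iff] at h
        obtain ⟨h0, h1, h2, h3⟩ := h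
        refine Prod.ext (Prod.ext h0 h2) ?_
        funext j
        rcases Nat.lt_succ_iff_lt_or_eq.1 j.2 with hj | hj
        · exact congrFun h3 ⟨j.1, hj⟩
        · have hji : j = ⟨i, Nat.lt_succ_self _⟩ := Subtype.ext (Fin.ext hj)
          rw [hji]; exact h1
      · intro ω; rfl
    rw [ea, eb, ec]
    have eg : ent μ (fun ω => (Zc ω, fun j : {j : Fin n // (j : ℕ) < (i : ℕ)} => Y j.1 ω))
        = G ↑i := rfl
    rw [eg]; ring
  rw [Finset.sum_congr rfl (fun i _ => step i), Finset.sum_add_distrib]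
  have t1 : ∑ i : Fin n, (F ↑i - F (↑i + 1)) = F 0 - F n := by
    rw [Fin.sum_univ_eq_sum_range (fun k => F k - F (k + 1)) n]
    exact Finset.sum_range_sub' F n
  have t2 : ∑ i : Fin n, (G (↑i + 1) - G ↑i) = G n - G 0 := by
    rw [Fin.sum_univ_eq_sum_range (fun k => G (k + 1) - G k) n]
    exact Finset.sum_range_sub G n
  rw [t1, t2]
  have hF0 : F 0 = ent μ (fun ω => (M ω, Zc ω)) := by
    apply ent_congr μ (e := fun p : A × C =>
      ((p.1, p.2), fun j : {j : Fin n // (j : ℕ) < 0} => (absurd j.2 (Nat.not_lt_zero _) : 𝒴)))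
    · intro p q h
      simp only [Prod.ext_iff] at h
      exact Prod.ext h.1.1 h.1.2
    · intro ω
      refine Prod.ext rfl ?_
      funext j; exact absurd j.2 (Nat.not_lt_zero _)
  have hG0 : G 0 = ent μ Zc := by
    apply ent_congr μ (e := fun z : C =>
      (z, fun j : {j : Fin n // (j : ℕ) < 0} => (absurd j.2 (Nat.not_lt_zero _) : 𝒴)))
    · intro p q h
      simp only [Prod.ext_iff] at h
      exact h.1
    · intro ω
      refine Prod.ext rfl ?_
      funext j; exact absurd j.2 (Nat.not_lt_zero _)
  have hFn : F n = ent μ (fun ω => (M ω, (fun i => Y i ω), Zc ω)) := by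
    symm
    apply ent_congr μ
      (e := fun p : (A × C) × ({j : Fin n // (j : ℕ) < n} → 𝒴) =>
        (p.1.1, fun i : Fin n => p.2 ⟨i, i.isLt⟩, p.1.2))
    · rintro ⟨⟨m, z⟩, g⟩ ⟨⟨m', z'⟩, g'⟩ h
      simp only [Prod.ext_iff] at h
      obtain ⟨h0, h1, h2⟩ := h
      refine Prod.ext (Prod.ext h0 h2) ?_
      funext j
      exact congrFun h1 j.1
    · intro ω; rfl
  have hGn : G n = ent μ (fun ω => ((fun i => Y i ω), Zc ω)) := by
    symm
    apply ent_congr μ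
      (e := fun p : C × ({j : Fin n // (j : ℕ) < n} → 𝒴) =>
        (fun i : Fin n => p.2 ⟨i, i.isLt⟩, p.1))
    · rintro ⟨z, g⟩ ⟨z', g'⟩ h
      simp only [Prod.ext_iff] at h
      refine Prod.ext h.2 ?_
      funext j
      exact congrFun h.1 j.1
    · intro ω; rfl
  rw [hF0, hG0, hFn, hGn]
  unfold cmi
  ring

end Aux

/-- Converse step for Theorem 1: with `M₁, M₂` independent of each other and of the
i.i.d.-free sequence `Sⁿ`, `M₁₂ = f₁₂(M₁,Sⁿ)`, `X₁ⁿ = f₁(M₁,Sⁿ)`, `X₂ⁿ = f₂(M₂,M₁₂)`,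
and `Yᵢ` conditionally independent of everything else given `(Sᵢ,X₁ᵢ,X₂ᵢ)`, one has,
with `Uᵢ = (M₁₂,Sⁱ⁻¹)`,
`I(M₁;Yⁿ|Sⁿ,M₂,M₁₂) ≤ Σᵢ I(X₁ᵢ;Yᵢ|Sᵢ,X₂ᵢ,Uᵢ)`. -/
theorem converse_bound_R1_one_way
    {Ω : Type} [Fintype Ω] (μ : Ω → ℝ) (hμ : IsPMF μ)
    {n : ℕ} {𝒮 𝒳₁ 𝒳₂ 𝒴 ℳ₁ ℳ₂ ℳ₁₂ : Type}
    [Fintype 𝒮] [Fintype 𝒳₁] [Fintype 𝒳₂] [Fintype 𝒴]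
    [Fintype ℳ₁] [Fintype ℳ₂] [Fintype ℳ₁₂]
    (S : Fin n → Ω → 𝒮) (Y : Fin n → Ω → 𝒴) (M1 : Ω → ℳ₁) (M2 : Ω → ℳ₂)
    (f12 : ℳ₁ → (Fin n → 𝒮) → ℳ₁₂)
    (f1 : ℳ₁ → (Fin n → 𝒮) → Fin n → 𝒳₁)
    (f2 : ℳ₂ → ℳ₁₂ → Fin n → 𝒳₂)
    (M12 : Ω → ℳ₁₂) (hM12 : ∀ ω, M12 ω = f12 (M1 ω) (fun i => S i ω))
    (X1 : Fin n → Ω → 𝒳₁) (hX1 : ∀ i ω, X1 i ω = f1 (M1 ω) (fun j => S j ω) i)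
    (X2 : Fin n → Ω → 𝒳₂) (hX2 : ∀ i ω, X2 i ω = f2 (M2 ω) (M12 ω) i)
    (hindep : ∀ (m1 : ℳ₁) (m2 : ℳ₂) (s : Fin n → 𝒮),
      pr μ (fun ω => (M1 ω, M2 ω, fun i => S i ω)) (m1, m2, s)
        = pr μ M1 m1 * pr μ M2 m2 * pr μ (fun ω => fun i => S i ω) s)
    (hY : ∀ i : Fin n, CondIndep μ (Y i)
      (fun ω => (M1 ω, M2 ω, M12 ω, (fun j => S j ω),
        (fun j => X1 j ω), (fun j => X2 j ω),
        (fun j : {j : Fin n // j < i} => Y j.1 ω)))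
      (fun ω => (S i ω, X1 i ω, X2 i ω))) :
    cmi μ M1 (fun ω => fun i => Y i ω)
        (fun ω => ((fun i => S i ω), M2 ω, M12 ω))
      ≤ ∑ i : Fin n, cmi μ (X1 i) (Y i)
          (fun ω => (S i ω, X2 i ω, M12 ω,
            fun j : {j : Fin n // j < i} => S j.1 ω)) := by
  classical
  have h0 := hμ.1
  rw [cmi_telescope μ M1 (fun ω => ((fun i => S i ω), M2 ω, M12 ω)) Y]
  apply Finset.sum_le_sum
  intro i _
  show cmi μ M1 (Y i) (fun ω => (((fun k => S k ω), M2 ω, M12 ω), (fun j : {j : Fin n // (j : ℕ) < (i : ℕ)} => Y j.1 ω)))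
      ≤ cmi μ (X1 i) (Y i) (fun ω => (S i ω, X2 i ω, M12 ω, fun j : {j : Fin n // j < i} => S j.1 ω))
  -- Step A : adjoin the (deterministic) conditioning data T i to the condition
  have hA : cmi μ M1 (Y i) (fun ω => ((((fun k => S k ω), M2 ω, M12 ω), (fun j : {j : Fin n // (j : ℕ) < (i : ℕ)} => Y j.1 ω)), (S i ω, X2 i ω, M12 ω, fun j : {j : Fin n // j < i} => S j.1 ω)))
      = cmi μ M1 (Y i) (fun ω => (((fun k => S k ω), M2 ω, M12 ω), (fun j : {j : Fin n // (j : ℕ) < (i : ℕ)} => Y j.1 ω))) := by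
    apply cmi_congr μ (e₁ := @id ℳ₁) (e₂ := @id 𝒴)
      (e₃ := fun p : ((Fin n → 𝒮) × ℳ₂ × ℳ₁₂) × ({j : Fin n // (j : ℕ) < (i : ℕ)} → 𝒴) =>
        (p, (p.1.1 i, f2 p.1.2.1 p.1.2.2 i, p.1.2.2,
          fun j : {j : Fin n // j < i} => p.1.1 j.1)))
      Function.injective_id Function.injective_id
      (fun p q h => congrArg Prod.fst h)
      (fun ω => rfl) (fun ω => rfl)
    intro ω
    simp only [hX2]
  -- Step B : chain rule, moving (M1) into the first slot
  have hchain1 : cmi μ (fun ω => (M1 ω, (((fun k => S k ω), M2 ω, M12 ω), (fun j : {j : Fin n // (j : ℕ) < (i : ℕ)} => Y j.1 ω)))) (Y i) (fun ω => (S i ω, X2 i ω, M12 ω, fun j : {j : Fin n // j < i} => S j.1 ω))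
      = cmi μ (fun ω => (((fun k => S k ω), M2 ω, M12 ω), (fun j : {j : Fin n // (j : ℕ) < (i : ℕ)} => Y j.1 ω))) (Y i) (fun ω => (S i ω, X2 i ω, M12 ω, fun j : {j : Fin n // j < i} => S j.1 ω))
        + cmi μ M1 (Y i) (fun ω => ((((fun k => S k ω), M2 ω, M12 ω), (fun j : {j : Fin n // (j : ℕ) < (i : ℕ)} => Y j.1 ω)), (S i ω, X2 i ω, M12 ω, fun j : {j : Fin n // j < i} => S j.1 ω))) :=
    cmi_chain μ M1 (fun ω => (((fun k => S k ω), M2 ω, M12 ω), (fun j : {j : Fin n // (j : ℕ) < (i : ℕ)} => Y j.1 ω))) (Y i) (fun ω => (S i ω, X2 i ω, M12 ω, fun j : {j : Fin n // j < i} => S j.1 ω))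
  have hW0 : 0 ≤ cmi μ (fun ω => (((fun k => S k ω), M2 ω, M12 ω), (fun j : {j : Fin n // (j : ℕ) < (i : ℕ)} => Y j.1 ω))) (Y i) (fun ω => (S i ω, X2 i ω, M12 ω, fun j : {j : Fin n // j < i} => S j.1 ω)) := cmi_nonneg μ hμ _ _ _
  -- Step C : extract X1 i
  have hP : cmi μ (fun ω => (((M1 ω, (((fun k => S k ω), M2 ω, M12 ω), (fun j : {j : Fin n // (j : ℕ) < (i : ℕ)} => Y j.1 ω)))), X1 i ω)) (Y i) (fun ω => (S i ω, X2 i ω, M12 ω, fun j : {j : Fin n // j < i} => S j.1 ω))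
      = cmi μ (fun ω => ((M1 ω, (((fun k => S k ω), M2 ω, M12 ω), (fun j : {j : Fin n // (j : ℕ) < (i : ℕ)} => Y j.1 ω))))) (Y i) (fun ω => (S i ω, X2 i ω, M12 ω, fun j : {j : Fin n // j < i} => S j.1 ω)) := by
    apply cmi_congr μ (e₁ := fun p : (ℳ₁ × ((Fin n → 𝒮) × ℳ₂ × ℳ₁₂) × ({j : Fin n // (j : ℕ) < (i : ℕ)} → 𝒴)) => (p, f1 p.1 p.2.1.1 i))
      (e₂ := @id 𝒴) (e₃ := @id (𝒮 × 𝒳₂ × ℳ₁₂ × ({j : Fin n // j < i} → 𝒮)))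
      (fun p q h => congrArg Prod.fst h)
      Function.injective_id Function.injective_id
      ?_ (fun ω => rfl) (fun ω => rfl)
    intro ω
    simp only [hX1]
  have hchain2 : cmi μ (fun ω => (((M1 ω, (((fun k => S k ω), M2 ω, M12 ω), (fun j : {j : Fin n // (j : ℕ) < (i : ℕ)} => Y j.1 ω)))), X1 i ω)) (Y i) (fun ω => (S i ω, X2 i ω, M12 ω, fun j : {j : Fin n // j < i} => S j.1 ω))
      = cmi μ (X1 i) (Y i) (fun ω => (S i ω, X2 i ω, M12 ω, fun j : {j : Fin n // j < i} => S j.1 ω))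
        + cmi μ (fun ω => ((M1 ω, (((fun k => S k ω), M2 ω, M12 ω), (fun j : {j : Fin n // (j : ℕ) < (i : ℕ)} => Y j.1 ω))))) (Y i) (fun ω => (X1 i ω, (S i ω, X2 i ω, M12 ω, fun j : {j : Fin n // j < i} => S j.1 ω))) :=
    cmi_chain μ (fun ω => ((M1 ω, (((fun k => S k ω), M2 ω, M12 ω), (fun j : {j : Fin n // (j : ℕ) < (i : ℕ)} => Y j.1 ω))))) (X1 i) (Y i) (fun ω => (S i ω, X2 i ω, M12 ω, fun j : {j : Fin n // j < i} => S j.1 ω))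
  -- Step D : the remaining conditional mutual information vanishes
  have hci0 : cmi μ (Y i) (fun ω => (M1 ω, M2 ω, M12 ω, (fun j => S j ω), (fun j => X1 j ω), (fun j => X2 j ω), (fun j : {j : Fin n // j < i} => Y j.1 ω))) (fun ω => (S i ω, X1 i ω, X2 i ω)) = 0 :=
    cmi_eq_zero_of_condIndep μ hμ (hY i)
  have h1 : cmi μ (fun ω => (M1 ω, M2 ω, M12 ω, (fun j => S j ω), (fun j => X1 j ω), (fun j => X2 j ω), (fun j : {j : Fin n // j < i} => Y j.1 ω))) (Y i) (fun ω => (S i ω, X1 i ω, X2 i ω)) = 0 :=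
    (cmi_comm μ (fun ω => (M1 ω, M2 ω, M12 ω, (fun j => S j ω), (fun j => X1 j ω), (fun j => X2 j ω), (fun j : {j : Fin n // j < i} => Y j.1 ω))) (Y i) (fun ω => (S i ω, X1 i ω, X2 i ω))).trans hci0
  have h2 : cmi μ (fun ω => ((M1 ω, M2 ω, M12 ω, (fun j => S j ω), (fun j => X1 j ω), (fun j => X2 j ω), (fun j : {j : Fin n // j < i} => Y j.1 ω)), ((M12 ω, fun j : {j : Fin n // j < i} => S j.1 ω)))) (Y i) (fun ω => (S i ω, X1 i ω, X2 i ω))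
      = cmi μ (fun ω => (M1 ω, M2 ω, M12 ω, (fun j => S j ω), (fun j => X1 j ω), (fun j => X2 j ω), (fun j : {j : Fin n // j < i} => Y j.1 ω))) (Y i) (fun ω => (S i ω, X1 i ω, X2 i ω)) := by
    apply cmi_congr μ
      (e₁ := fun b : (ℳ₁ × ℳ₂ × ℳ₁₂ × (Fin n → 𝒮) × (Fin n → 𝒳₁) × (Fin n → 𝒳₂) × ({j : Fin n // j < i} → 𝒴)) => (b, (b.2.2.1, fun j : {j : Fin n // j < i} => b.2.2.2.1 j.1)))
      (e₂ := @id 𝒴) (e₃ := @id (𝒮 × 𝒳₁ × 𝒳₂))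
      (fun p q h => congrArg Prod.fst h)
      Function.injective_id Function.injective_id
      (fun ω => rfl) (fun ω => rfl) (fun ω => rfl)
  have h3 : cmi μ (fun ω => ((M1 ω, M2 ω, M12 ω, (fun j => S j ω), (fun j => X1 j ω), (fun j => X2 j ω), (fun j : {j : Fin n // j < i} => Y j.1 ω)), ((M12 ω, fun j : {j : Fin n // j < i} => S j.1 ω)))) (Y i) (fun ω => (S i ω, X1 i ω, X2 i ω))
      = cmi μ (fun ω => ((M12 ω, fun j : {j : Fin n // j < i} => S j.1 ω))) (Y i) (fun ω => (S i ω, X1 i ω, X2 i ω))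
        + cmi μ (fun ω => (M1 ω, M2 ω, M12 ω, (fun j => S j ω), (fun j => X1 j ω), (fun j => X2 j ω), (fun j : {j : Fin n // j < i} => Y j.1 ω))) (Y i) (fun ω => (((M12 ω, fun j : {j : Fin n // j < i} => S j.1 ω)), (S i ω, X1 i ω, X2 i ω))) :=
    cmi_chain μ (fun ω => (M1 ω, M2 ω, M12 ω, (fun j => S j ω), (fun j => X1 j ω), (fun j => X2 j ω), (fun j : {j : Fin n // j < i} => Y j.1 ω))) (fun ω => ((M12 ω, fun j : {j : Fin n // j < i} => S j.1 ω))) (Y i) (fun ω => (S i ω, X1 i ω, X2 i ω))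
  have h4 : cmi μ (fun ω => (M1 ω, M2 ω, M12 ω, (fun j => S j ω), (fun j => X1 j ω), (fun j => X2 j ω), (fun j : {j : Fin n // j < i} => Y j.1 ω))) (Y i) (fun ω => (((M12 ω, fun j : {j : Fin n // j < i} => S j.1 ω)), (S i ω, X1 i ω, X2 i ω))) = 0 := by
    have n1 := cmi_nonneg μ hμ (fun ω => ((M12 ω, fun j : {j : Fin n // j < i} => S j.1 ω))) (Y i) (fun ω => (S i ω, X1 i ω, X2 i ω))
    have n2 := cmi_nonneg μ hμ (fun ω => (M1 ω, M2 ω, M12 ω, (fun j => S j ω), (fun j => X1 j ω), (fun j => X2 j ω), (fun j : {j : Fin n // j < i} => Y j.1 ω))) (Y i) (fun ω => (((M12 ω, fun j : {j : Fin n // j < i} => S j.1 ω)), (S i ω, X1 i ω, X2 i ω)))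
    linarith
  have h5 : cmi μ (fun ω => ((M1 ω, M2 ω, M12 ω, (fun j => S j ω), (fun j => X1 j ω), (fun j => X2 j ω), (fun j : {j : Fin n // j < i} => Y j.1 ω)), ((M1 ω, (((fun k => S k ω), M2 ω, M12 ω), (fun j : {j : Fin n // (j : ℕ) < (i : ℕ)} => Y j.1 ω)))))) (Y i) (fun ω => (((M12 ω, fun j : {j : Fin n // j < i} => S j.1 ω)), (S i ω, X1 i ω, X2 i ω)))
      = cmi μ (fun ω => (M1 ω, M2 ω, M12 ω, (fun j => S j ω), (fun j => X1 j ω), (fun j => X2 j ω), (fun j : {j : Fin n // j < i} => Y j.1 ω))) (Y i) (fun ω => (((M12 ω, fun j : {j : Fin n // j < i} => S j.1 ω)), (S i ω, X1 i ω, X2 i ω))) := by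
    apply cmi_congr μ
      (e₁ := fun b : (ℳ₁ × ℳ₂ × ℳ₁₂ × (Fin n → 𝒮) × (Fin n → 𝒳₁) × (Fin n → 𝒳₂) × ({j : Fin n // j < i} → 𝒴)) =>
        (b, (b.1, ((b.2.2.2.1, b.2.1, b.2.2.1),
          fun j : {j : Fin n // (j : ℕ) < (i : ℕ)} => b.2.2.2.2.2.2 ⟨j.1, j.2⟩))))
      (e₂ := @id 𝒴) (e₃ := @id ((ℳ₁₂ × ({j : Fin n // j < i} → 𝒮)) × (𝒮 × 𝒳₁ × 𝒳₂)))
      (fun p q h => congrArg Prod.fst h)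
      Function.injective_id Function.injective_id
      (fun ω => rfl) (fun ω => rfl) (fun ω => rfl)
  have h6 : cmi μ (fun ω => ((M1 ω, M2 ω, M12 ω, (fun j => S j ω), (fun j => X1 j ω), (fun j => X2 j ω), (fun j : {j : Fin n // j < i} => Y j.1 ω)), ((M1 ω, (((fun k => S k ω), M2 ω, M12 ω), (fun j : {j : Fin n // (j : ℕ) < (i : ℕ)} => Y j.1 ω)))))) (Y i) (fun ω => (((M12 ω, fun j : {j : Fin n // j < i} => S j.1 ω)), (S i ω, X1 i ω, X2 i ω)))
      = cmi μ (fun ω => ((M1 ω, (((fun k => S k ω), M2 ω, M12 ω), (fun j : {j : Fin n // (j : ℕ) < (i : ℕ)} => Y j.1 ω))))) (Y i) (fun ω => (((M12 ω, fun j : {j : Fin n // j < i} => S j.1 ω)), (S i ω, X1 i ω, X2 i ω)))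
        + cmi μ (fun ω => (M1 ω, M2 ω, M12 ω, (fun j => S j ω), (fun j => X1 j ω), (fun j => X2 j ω), (fun j : {j : Fin n // j < i} => Y j.1 ω))) (Y i) (fun ω => (((M1 ω, (((fun k => S k ω), M2 ω, M12 ω), (fun j : {j : Fin n // (j : ℕ) < (i : ℕ)} => Y j.1 ω)))), (((M12 ω, fun j : {j : Fin n // j < i} => S j.1 ω)), (S i ω, X1 i ω, X2 i ω)))) :=
    cmi_chain μ (fun ω => (M1 ω, M2 ω, M12 ω, (fun j => S j ω), (fun j => X1 j ω), (fun j => X2 j ω), (fun j : {j : Fin n // j < i} => Y j.1 ω))) (fun ω => ((M1 ω, (((fun k => S k ω), M2 ω, M12 ω), (fun j : {j : Fin n // (j : ℕ) < (i : ℕ)} => Y j.1 ω))))) (Y i) (fun ω => (((M12 ω, fun j : {j : Fin n // j < i} => S j.1 ω)), (S i ω, X1 i ω, X2 i ω)))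
  have h7 : cmi μ (fun ω => ((M1 ω, (((fun k => S k ω), M2 ω, M12 ω), (fun j : {j : Fin n // (j : ℕ) < (i : ℕ)} => Y j.1 ω))))) (Y i) (fun ω => (((M12 ω, fun j : {j : Fin n // j < i} => S j.1 ω)), (S i ω, X1 i ω, X2 i ω))) = 0 := by
    have n1 := cmi_nonneg μ hμ (fun ω => ((M1 ω, (((fun k => S k ω), M2 ω, M12 ω), (fun j : {j : Fin n // (j : ℕ) < (i : ℕ)} => Y j.1 ω))))) (Y i) (fun ω => (((M12 ω, fun j : {j : Fin n // j < i} => S j.1 ω)), (S i ω, X1 i ω, X2 i ω)))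
    have n2 := cmi_nonneg μ hμ (fun ω => (M1 ω, M2 ω, M12 ω, (fun j => S j ω), (fun j => X1 j ω), (fun j => X2 j ω), (fun j : {j : Fin n // j < i} => Y j.1 ω))) (Y i) (fun ω => (((M1 ω, (((fun k => S k ω), M2 ω, M12 ω), (fun j : {j : Fin n // (j : ℕ) < (i : ℕ)} => Y j.1 ω)))), (((M12 ω, fun j : {j : Fin n // j < i} => S j.1 ω)), (S i ω, X1 i ω, X2 i ω))))
    linarith
  have h8 : cmi μ (fun ω => ((M1 ω, (((fun k => S k ω), M2 ω, M12 ω), (fun j : {j : Fin n // (j : ℕ) < (i : ℕ)} => Y j.1 ω))))) (Y i) (fun ω => (X1 i ω, (S i ω, X2 i ω, M12 ω, fun j : {j : Fin n // j < i} => S j.1 ω)))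
      = cmi μ (fun ω => ((M1 ω, (((fun k => S k ω), M2 ω, M12 ω), (fun j : {j : Fin n // (j : ℕ) < (i : ℕ)} => Y j.1 ω))))) (Y i) (fun ω => (((M12 ω, fun j : {j : Fin n // j < i} => S j.1 ω)), (S i ω, X1 i ω, X2 i ω))) := by
    have hinj : Function.Injective
        (fun p : (ℳ₁₂ × ({j : Fin n // j < i} → 𝒮)) × (𝒮 × 𝒳₁ × 𝒳₂) =>
          ((p.2.2.1, (p.2.1, p.2.2.2, p.1.1, p.1.2)) :
            𝒳₁ × (𝒮 × 𝒳₂ × ℳ₁₂ × ({j : Fin n // j < i} → 𝒮)))) := by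
      intro p q h
      simp only [Prod.ext_iff] at h
      obtain ⟨hx1, hs, hx2, hm, hsl⟩ := h
      exact Prod.ext (Prod.ext hm hsl) (Prod.ext hs (Prod.ext hx1 hx2))
    exact cmi_congr μ Function.injective_id Function.injective_id hinj
      (fun ω => rfl) (fun ω => rfl) (fun ω => rfl)
  linarith [hA, hchain1, hW0, hP, hchain2, h8, h7]


end Paper
end
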